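/- arXiv:2402.08357 — 6 statements merged into one kernel-verified Lean document; each statement's English description precedes it below -/
import Mathlib

section
/- Let G be a finite group acting transitively on a finite set Ω, let H be the stabilizer of a point of Ω, let p be a prime dividing |H|, let C be a conjugacy class of G consisting of elements of order p of maximal p-fixity, and let g ∈ H ∩ C. If the action of G on Ω is binary, then every vertex lying in the connected component of the graph Γ(C) that contains g belongs to H. -/
/-- `I` and `J` are `r`-related under the action of `G`. -/
def Related (G : Type*) {Ω : Type*} [Group G] [MulAction G Ω] {n : ℕ} (r : ℕ)
    (I J : Fin n → Ω) : Prop :=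
  ∀ k : Fin r → Fin n, StrictMono k → ∃ g : G, ∀ i, g • I (k i) = J (k i)

/-- The action of `G` on `Ω` is binary. -/
def IsBinary (G Ω : Type*) [Group G] [MulAction G Ω] : Prop :=
  ∀ n : ℕ, 2 ≤ n → ∀ I J : Fin n → Ω, Related G 2 I J → Related G n I J

/-- The graph `Γ(D)` associated to a subset `D` of a group. -/
def classGraph {G : Type*} [Group G] (D : Set G) : SimpleGraph G where
  Adj g h := g ≠ h ∧ g ∈ D ∧ h ∈ D ∧ Commute g h ∧ (g * h⁻¹ ∈ D ∨ h * g⁻¹ ∈ D)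
  symm := by
    constructor
    rintro g h ⟨hne, hg, hh, hc, hd⟩
    exact ⟨hne.symm, hh, hg, hc.symm, hd.symm⟩
  loopless := by constructor; rintro g ⟨hne, -⟩; exact hne rfl

/-- `Δ(g, D)`: the subgroup generated by the vertices in the connected component
of `Γ(D)` containing `g`. -/
def Delta {G : Type*} [Group G] (g : G) (D : Set G) : Subgroup G :=
  Subgroup.closure {h | h ∈ D ∧ (classGraph D).Reachable g h}

/-- The component group `Δ(g)` of `g` : here `D` is the conjugacy class of `g`. -/
def DeltaC {G : Type*} [Group G] (g : G) : Subgroup G :=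
  Delta g {x | IsConj g x}

/-- `D` is a union of conjugacy classes. -/
def IsUnionConjClasses {G : Type*} [Group G] (D : Set G) : Prop :=
  ∀ x ∈ D, ∀ y : G, IsConj x y → y ∈ D

/-- The fixity of `g` acting on `Ω`: the number of fixed points of `g`. -/
noncomputable def fixity (G Ω : Type*) [Group G] [MulAction G Ω] (g : G) : ℕ :=
  Nat.card (MulAction.fixedBy Ω g)

/-- `g` is an element of order `p` of maximal `p`-fixity. -/
def MaxPFixity (G Ω : Type*) [Group G] [MulAction G Ω] (p : ℕ) (g : G) : Prop :=
  orderOf g = p ∧ ∀ h : G, orderOf h = p → fixity G Ω h ≤ fixity G Ω g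

/-- The ascending sequence of unions of conjugacy classes `D_1 = D`,
`D_{i+1}` = union of the conjugacy classes of elements of order `p`
meeting `Δ(g, D_i)`. -/
def DSeq {G : Type*} [Group G] (g : G) (D : Set G) (p : ℕ) : ℕ → Set G
  | 0 => D
  | i + 1 => {x : G | orderOf x = p ∧ ∃ y ∈ Delta g (DSeq g D p i), IsConj x y}

/-- `Δ_∞(g, D)`: the union of the chain `Δ(g, D_1) ≤ Δ(g, D_2) ≤ ⋯`. -/
def DeltaInf {G : Type*} [Group G] (g : G) (D : Set G) (p : ℕ) : Subgroup G :=
  ⨆ i : ℕ, Delta g (DSeq g D p i)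

/-- The terminal component group `Δ_∞(g)` of an element `g` of order `p`. -/
def DeltaInfC {G : Type*} [Group G] (g : G) (p : ℕ) : Subgroup G :=
  DeltaInf g {x | IsConj g x} p



section Aux
variable {G Ω : Type*} [Group G] [MulAction G Ω]

lemma fixedBy_conj' (c x : G) :
    MulAction.fixedBy Ω (c * x * c⁻¹) = (fun v => c • v) '' MulAction.fixedBy Ω x := by
  ext v
  simp only [MulAction.mem_fixedBy, Set.mem_image, mul_smul]
  constructor
  · intro h
    refine ⟨c⁻¹ • v, ?_, by simp⟩
    have := congrArg (fun t => c⁻¹ • t) h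
    simpa [smul_smul] using this
  · rintro ⟨u, hu, rfl⟩
    simp only [inv_smul_smul]
    rw [hu]

lemma fixity_conj (c x : G) : fixity G Ω (c * x * c⁻¹) = fixity G Ω x := by
  rw [fixity, fixity, Nat.card_coe_set_eq, Nat.card_coe_set_eq, fixedBy_conj',
    Set.ncard_image_of_injective _ (MulAction.injective c)]

lemma fixity_isConj {x y : G} (h : IsConj x y) : fixity G Ω y = fixity G Ω x := by
  obtain ⟨c, hc⟩ := isConj_iff.mp h
  rw [← hc, fixity_conj]

lemma fixedBy_inv' (x : G) : MulAction.fixedBy Ω x⁻¹ = MulAction.fixedBy Ω x := by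
  ext v
  simp only [MulAction.mem_fixedBy]
  constructor
  · intro h; have := congrArg (fun t => x • t) h; simpa using this.symm
  · intro h; have := congrArg (fun t => x⁻¹ • t) h; simpa using this.symm

lemma fixity_inv (x : G) : fixity G Ω x⁻¹ = fixity G Ω x := by
  rw [fixity, fixity, fixedBy_inv']

lemma smul_pow_fixed (w : G) (v : Ω) (h : w • v = v) (m : ℕ) : w ^ m • v = v := by
  induction m with
  | zero => simp
  | succ m ih => rw [pow_succ, mul_smul, h, ih]

end Aux

/-- The key step: if `x – y` is an edge of `Γ(C)` and `x` fixes `ω`, then `y` fixes `ω`. -/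
lemma step_lemma {G Ω : Type*} [Group G] [Finite G] [Fintype Ω] [MulAction G Ω]
    (p : ℕ) (hp : p.Prime) (f : ℕ)
    (x y : G) (hyord : orderOf y = p)
    (hfx : fixity G Ω x = f) (hfy : fixity G Ω y = f) (hfz : fixity G Ω (x * y⁻¹) = f)
    (hmax : ∀ h : G, orderOf h = p → fixity G Ω h ≤ f)
    (hcomm : Commute x y)
    (hbin : IsBinary G Ω) (ω : Ω) (hω : x • ω = ω) : y • ω = ω := by
  classical
  by_contra hyω
  set z := x * y⁻¹ with hzdef
  set A := MulAction.fixedBy Ω x with hA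
  set B := MulAction.fixedBy Ω y with hB
  set Z := MulAction.fixedBy Ω z with hZ
  have hcomm' : Commute x y⁻¹ := hcomm.inv_right
  have hBinv : ∀ v ∈ B, y⁻¹ • v = v := by
    intro v hv
    rw [inv_smul_eq_iff]
    exact (show y • v = v from hv).symm
  -- z acts as y⁻¹ on A
  have h1 : ∀ v ∈ A, z • v = y⁻¹ • v := by
    intro v hv
    have hv' : x • v = v := hv
    show (x * y⁻¹) • v = y⁻¹ • v
    rw [hcomm'.eq, mul_smul, hv']
  -- z acts as x on B
  have h2 : ∀ v ∈ B, z • v = x • v := by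
    intro v hv
    show (x * y⁻¹) • v = x • v
    rw [mul_smul, hBinv v hv]
  -- y⁻¹ preserves A
  have hAinv : ∀ v ∈ A, y⁻¹ • v ∈ A := by
    intro v hv
    have hv' : x • v = v := hv
    show x • (y⁻¹ • v) = y⁻¹ • v
    rw [← mul_smul, hcomm'.eq, mul_smul, hv']
  -- y⁻¹ preserves A \ B
  have hABinv : ∀ v ∈ A, v ∉ B → (y⁻¹ • v ∈ A ∧ y⁻¹ • v ∉ B) := by
    intro v hv hvB
    refine ⟨hAinv v hv, fun hmem => hvB ?_⟩
    have hmem' : y • (y⁻¹ • v) = y⁻¹ • v := hmem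
    have h3 : y • (y⁻¹ • v) = v := smul_inv_smul y v
    have h4 : y⁻¹ • v = v := by rw [← hmem', h3]
    show y • v = v
    rw [← h4]
    exact hmem'
  -- Z ∩ A ⊆ B
  have hZAB : ∀ v ∈ Z, v ∈ A → v ∈ B := by
    intro v hvZ hvA
    have hzv : z • v = v := hvZ
    rw [h1 v hvA] at hzv
    show y • v = v
    rw [← hzv, smul_inv_smul]
    exact hzv.symm
  -- Z ∩ B = A ∩ B
  have hZB : Z ∩ B = A ∩ B := by
    ext v
    constructor
    · rintro ⟨hvZ, hvB⟩
      have hzv : z • v = v := hvZ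
      rw [h2 v hvB] at hzv
      exact ⟨hzv, hvB⟩
    · rintro ⟨hvA, hvB⟩
      refine ⟨?_, hvB⟩
      show z • v = v
      rw [h2 v hvB]
      exact hvA
  set S : Set Ω := A ∪ B ∪ Z with hS
  set δ : Ω → Ω := fun v => if v ∈ A ∧ v ∉ B then z • v else v with hδ
  have hδAB : ∀ v, v ∈ A → v ∉ B → δ v = z • v := by
    intro v h h'
    simp only [hδ]
    rw [if_pos ⟨h, h'⟩]
  have hδelse : ∀ v, ¬(v ∈ A ∧ v ∉ B) → δ v = v := by
    intro v h
    simp only [hδ]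
    rw [if_neg h]
  -- pairwise witnesses
  have pair : ∀ u ∈ S, ∀ v ∈ S, ∃ w : G, w • u = δ u ∧ w • v = δ v := by
    have key : ∀ v ∈ S, ¬(v ∈ A ∧ v ∉ B) → (v ∈ B ∨ v ∈ Z) := by
      intro v hv hno
      rcases hv with (hvA | hvB) | hvZ
      · by_cases hB' : v ∈ B
        · exact Or.inl hB'
        · exact absurd ⟨hvA, hB'⟩ hno
      · exact Or.inl hvB
      · exact Or.inr hvZ
    have wit : ∀ u, (u ∈ A ∧ u ∉ B) → ∀ v ∈ S, ¬(v ∈ A ∧ v ∉ B) →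
        ∃ w : G, w • u = δ u ∧ w • v = δ v := by
      intro u hu v hv hno
      rw [hδAB u hu.1 hu.2, hδelse v hno]
      rcases key v hv hno with hvB | hvZ
      · exact ⟨y⁻¹, by rw [h1 u hu.1], hBinv v hvB⟩
      · exact ⟨z, rfl, hvZ⟩
    intro u hu v hv
    by_cases h1u : u ∈ A ∧ u ∉ B <;> by_cases h1v : v ∈ A ∧ v ∉ B
    · rw [hδAB u h1u.1 h1u.2, hδAB v h1v.1 h1v.2]
      exact ⟨z, rfl, rfl⟩
    · exact wit u h1u v hv h1v
    · obtain ⟨w, hw1, hw2⟩ := wit v h1v u hu h1u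
      exact ⟨w, hw2, hw1⟩
    · rw [hδelse u h1u, hδelse v h1v]
      exact ⟨1, one_smul G u, one_smul G v⟩
  -- apply binarity to get a global witness
  have hωA : ω ∈ A := hω
  have hωB : ω ∉ B := hyω
  have hωS : ω ∈ S := Or.inl (Or.inl hωA)
  have hnA : A.ncard = f := by rw [← hfx, fixity, Nat.card_coe_set_eq]
  have hnB : B.ncard = f := by rw [← hfy, fixity, Nat.card_coe_set_eq]
  have hnZ : Z.ncard = f := by rw [← hfz, fixity, Nat.card_coe_set_eq]
  have hBne : B.Nonempty := by
    rw [← Set.ncard_pos, hnB]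
    have hApos : 0 < A.ncard := (Set.ncard_pos (Set.toFinite A)).mpr ⟨ω, hωA⟩
    omega
  obtain ⟨β, hβB⟩ := hBne
  have hβS : β ∈ S := Or.inl (Or.inr hβB)
  have hβω : β ≠ ω := fun h => hωB (h ▸ hβB)
  obtain ⟨w, hwS⟩ : ∃ w : G, ∀ v ∈ S, w • v = δ v := by
    have hn2 : 2 ≤ Nat.card S := by
      refine Finite.one_lt_card_iff_nontrivial.mpr ⟨⟨ω, hωS⟩, ⟨β, hβS⟩, ?_⟩
      simp [hβω.symm]
    set n := Nat.card S with hn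
    have e : S ≃ Fin n := Finite.equivFin S
    have h2rel : Related G 2 (fun i => ((e.symm i : S) : Ω))
        (fun i => δ ((e.symm i : S) : Ω)) := by
      intro k _
      obtain ⟨w, hw1, hw2⟩ := pair ((e.symm (k 0) : S) : Ω) (e.symm (k 0)).2
        ((e.symm (k 1) : S) : Ω) (e.symm (k 1)).2
      refine ⟨w, ?_⟩
      intro i
      fin_cases i
      · exact hw1
      · exact hw2
    obtain ⟨w, hw⟩ := hbin n hn2 _ _ h2rel id strictMono_id
    refine ⟨w, fun v hv => ?_⟩
    have := hw (e ⟨v, hv⟩)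
    simpa using this
  -- properties of w
  have hwB : ∀ v ∈ B, w • v = v := by
    intro v hv
    rw [hwS v (Or.inl (Or.inr hv)), hδelse v (fun h => h.2 hv)]
  have hwZ : ∀ v ∈ Z, w • v = v := by
    intro v hv
    rw [hwS v (Or.inr hv), hδelse v (fun h => h.2 (hZAB v hv h.1))]
  have hwA : ∀ v, v ∈ A → v ∉ B → w • v = y⁻¹ • v := by
    intro v hv hv'
    rw [hwS v (Or.inl (Or.inl hv)), hδAB v hv hv', h1 v hv]
  -- w^i • ω = (y⁻¹)^i • ω
  have claim : ∀ i : ℕ, w ^ i • ω = (y⁻¹) ^ i • ω ∧ ((y⁻¹) ^ i • ω ∈ A ∧ (y⁻¹) ^ i • ω ∉ B) := by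
    intro i
    induction i with
    | zero => simp only [pow_zero, one_smul]; exact ⟨trivial, hωA, hωB⟩
    | succ i ih =>
      obtain ⟨hpow, hmemA, hmemB⟩ := ih
      have hstep : w • ((y⁻¹) ^ i • ω) = y⁻¹ • ((y⁻¹) ^ i • ω) := hwA _ hmemA hmemB
      constructor
      · rw [pow_succ', mul_smul, hpow, hstep, ← mul_smul, ← pow_succ']
      · rw [pow_succ', mul_smul]
        exact hABinv _ hmemA hmemB
  -- p divides the order of w
  set N := orderOf w with hN
  have hyN : (y⁻¹) ^ N • ω = ω := by
    have h := (claim N).1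
    have hw1 : w ^ N = 1 := by rw [hN]; exact pow_orderOf_eq_one w
    rw [hw1, one_smul] at h
    exact h.symm
  have hpN : p ∣ N := by
    by_contra hnd
    have hcop : Nat.Coprime N p := (hp.coprime_iff_not_dvd.mpr hnd).symm
    obtain ⟨c, -, hc⟩ := Nat.exists_mul_mod_eq_one_of_coprime hcop hp.one_lt
    have hyinvord : orderOf (y⁻¹ : G) = p := by rw [orderOf_inv, hyord]
    have h1' : (y⁻¹) ^ (N * c) • ω = ω := by
      rw [pow_mul]
      exact smul_pow_fixed _ _ hyN c
    have h2' : (y⁻¹ : G) ^ (N * c % p) = (y⁻¹) ^ (N * c) := by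
      rw [← hyinvord]
      exact pow_mod_orderOf y⁻¹ (N * c)
    rw [hc] at h2'
    rw [← h2', pow_one] at h1'
    exact hyω (by rw [← h1', smul_inv_smul]; exact h1'.symm)
  have hN0 : N ≠ 0 := by
    rw [hN]
    exact (orderOf_pos w).ne'
  have hk0 : N / p ≠ 0 :=
    (Nat.div_pos (Nat.le_of_dvd (Nat.pos_of_ne_zero hN0) hpN) hp.pos).ne'
  -- the order-p element E
  have hEord : orderOf (w ^ (N / p)) = p := by
    rw [orderOf_pow' w hk0, ← hN, Nat.gcd_eq_right (Nat.div_dvd_of_dvd hpN),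
      Nat.div_div_self hpN hN0]
  have hEfix : ∀ v ∈ Z ∪ B, w ^ (N / p) • v = v := by
    intro v hv
    refine smul_pow_fixed w v ?_ (N / p)
    rcases hv with hv | hv
    · exact hwZ v hv
    · exact hwB v hv
  -- cardinality contradiction
  have hcard1 : (Z ∪ B).ncard ≤ f := by
    calc (Z ∪ B).ncard ≤ (MulAction.fixedBy Ω (w ^ (N / p))).ncard :=
          Set.ncard_le_ncard (fun v hv => hEfix v hv) (Set.toFinite _)
    _ = fixity G Ω (w ^ (N / p)) := by rw [fixity, Nat.card_coe_set_eq]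
    _ ≤ f := hmax _ hEord
  have hcard2 : (Z ∪ B).ncard + (Z ∩ B).ncard = Z.ncard + B.ncard :=
    Set.ncard_union_add_ncard_inter Z B (Set.toFinite _) (Set.toFinite _)
  have hABlt : (A ∩ B).ncard < f := by
    rw [← hnA]
    apply Set.ncard_lt_ncard _ (Set.toFinite A)
    constructor
    · exact Set.inter_subset_left
    · intro hsub
      exact hωB (hsub hωA).2
  rw [hZB] at hcard2
  omega

theorem stmt0 {G Ω : Type*} [Group G] [Fintype G] [Fintype Ω] [MulAction G Ω]
    [MulAction.IsPretransitive G Ω] (ω : Ω)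
    (p : ℕ) (hp : p.Prime)
    (hdvd : p ∣ Nat.card (MulAction.stabilizer G ω))
    (C : Set G) (g : G)
    (hC : C = {x : G | IsConj g x})
    (hCfix : ∀ x ∈ C, MaxPFixity G Ω p x)
    (hgH : g ∈ MulAction.stabilizer G ω) (hgC : g ∈ C)
    (hbin : IsBinary G Ω) :
    ∀ h ∈ C, (classGraph C).Reachable g h → h ∈ MulAction.stabilizer G ω := by
  classical
  have hconj : ∀ u ∈ C, IsConj g u := fun u hu => by rw [hC] at hu; exact hu
  have step : ∀ a b : G, (classGraph C).Adj a b → a ∈ MulAction.stabilizer G ω →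
      b ∈ MulAction.stabilizer G ω := by
    rintro a b ⟨hne, haC, hbC, hcomm, hd⟩ ha
    have hordb : orderOf b = p := (hCfix b hbC).1
    have hfa : fixity G Ω a = fixity G Ω g := fixity_isConj (hconj a haC)
    have hfb : fixity G Ω b = fixity G Ω g := fixity_isConj (hconj b hbC)
    have hfz : fixity G Ω (a * b⁻¹) = fixity G Ω g := by
      rcases hd with hd | hd
      · exact fixity_isConj (hconj _ hd)
      · have habe : a * b⁻¹ = (b * a⁻¹)⁻¹ := by group
        rw [habe, fixity_inv]
        exact fixity_isConj (hconj _ hd)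
    have hmax : ∀ h : G, orderOf h = p → fixity G Ω h ≤ fixity G Ω g := (hCfix g hgC).2
    have hb := step_lemma p hp (fixity G Ω g) a b hordb hfa hfb hfz hmax hcomm hbin ω
      (MulAction.mem_stabilizer_iff.mp ha)
    exact MulAction.mem_stabilizer_iff.mpr hb
  suffices H : ∀ (a b : G) (w : (classGraph C).Walk a b),
      a ∈ MulAction.stabilizer G ω → b ∈ MulAction.stabilizer G ω by
    intro h _ hreach
    obtain ⟨w⟩ := hreach
    exact H g h w hgH
  intro a b w
  induction w with
  | nil => exact id
  | cons hadj _ ih => exact fun ha => ih (step _ _ hadj ha)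
end

section
/- Let p be a prime, let G be a finite group acting on a finite set Λ, and let g₁, g₂ be distinct commuting elements of G of order p. Set g₃ = g₁g₂⁻¹ and let F_i denote the fixed-point set of g_i on Λ for i = 1, 2, 3. Assume |F₁| = |F₂| = |F₃| ≥ 1 and F₁ ≠ F₂. If the action of G on Λ is binary, then there exists h ∈ G such that x·h = x·g₁ for all x ∈ F₃ and x·h = x for all x ∈ (F₁ ∪ F₂ ∪ F₃) ∖ F₃; in particular, the fixed-point set of h properly contains F₁. -/
theorem stmt2 {G Λ : Type*} [Group G] [Fintype G] [Fintype Λ] [MulAction G Λ]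
    (p : ℕ) (hp : p.Prime)
    (g₁ g₂ : G) (hne : g₁ ≠ g₂) (hcomm : Commute g₁ g₂)
    (ho₁ : orderOf g₁ = p) (ho₂ : orderOf g₂ = p)
    (g₃ : G) (hg₃ : g₃ = g₁ * g₂⁻¹)
    (F₁ F₂ F₃ : Set Λ)
    (hF₁ : F₁ = MulAction.fixedBy Λ g₁)
    (hF₂ : F₂ = MulAction.fixedBy Λ g₂)
    (hF₃ : F₃ = MulAction.fixedBy Λ g₃)
    (hcard₁ : Nat.card F₁ = Nat.card F₂) (hcard₂ : Nat.card F₂ = Nat.card F₃)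
    (hpos : 1 ≤ Nat.card F₃)
    (hFne : F₁ ≠ F₂)
    (hbin : IsBinary G Λ) :
    ∃ h : G, (∀ x ∈ F₃, h • x = g₁ • x) ∧
      (∀ x ∈ (F₁ ∪ F₂ ∪ F₃) \ F₃, h • x = x) ∧
      MulAction.fixedBy Λ g₁ ⊂ MulAction.fixedBy Λ h := by
  classical
  -- basic fixed-point facts
  have hfix₁ : ∀ x ∈ F₁, g₁ • x = x := by
    intro x hx; rwa [hF₁, MulAction.mem_fixedBy] at hx
  have hfix₂ : ∀ x ∈ F₂, g₂ • x = x := by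
    intro x hx; rwa [hF₂, MulAction.mem_fixedBy] at hx
  have hfix₃ : ∀ x ∈ F₃, g₃ • x = x := by
    intro x hx; rwa [hF₃, MulAction.mem_fixedBy] at hx
  -- on F₃, g₂ acts like g₁
  have hA : ∀ x ∈ F₃, g₂ • x = g₁ • x := by
    intro x hx
    have h1 : (g₂⁻¹ * g₁) • x = x := by
      rw [← hcomm.inv_right.eq, ← hg₃]; exact hfix₃ x hx
    rw [mul_smul] at h1
    calc g₂ • x = g₂ • (g₂⁻¹ • (g₁ • x)) := by rw [h1]
      _ = g₁ • x := smul_inv_smul _ _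
  -- F₁ ∩ F₂ ⊆ F₃
  have hB : ∀ x, x ∈ F₁ → x ∈ F₂ → x ∈ F₃ := by
    intro x hx1 hx2
    rw [hF₃, MulAction.mem_fixedBy, hg₃, mul_smul]
    have h2 : g₂⁻¹ • x = x := by
      rw [inv_smul_eq_iff]; exact (hfix₂ x hx2).symm
    rw [h2]; exact hfix₁ x hx1
  -- F₂ ∩ F₃ ⊆ F₁
  have hC : ∀ x, x ∈ F₂ → x ∈ F₃ → x ∈ F₁ := by
    intro x hx2 hx3
    rw [hF₁, MulAction.mem_fixedBy, ← hA x hx3]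
    exact hfix₂ x hx2
  -- there is a point of F₂ outside F₃
  have hnotsub : ¬ F₂ ⊆ F₃ := by
    intro hsub
    have hsub' : F₂ ⊆ F₁ := fun x hx => hC x hx (hsub hx)
    have hcard' : F₁.ncard ≤ F₂.ncard := by
      rw [← Nat.card_coe_set_eq, ← Nat.card_coe_set_eq, hcard₁]
    exact hFne (Set.eq_of_subset_of_ncard_le hsub' hcard' (Set.toFinite _)).symm
  obtain ⟨a, haF₂, haF₃⟩ := Set.not_subset.mp hnotsub
  obtain ⟨⟨b, hbF₃⟩, -⟩ := Nat.card_pos_iff.mp hpos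
  have hab : a ≠ b := fun h => haF₃ (h ▸ hbF₃)
  set S : Set Λ := F₁ ∪ F₂ ∪ F₃ with hS
  have haS : a ∈ S := Or.inl (Or.inr haF₂)
  have hbS : b ∈ S := Or.inr hbF₃
  haveI : Fintype S := (Set.toFinite S).fintype
  set n := Fintype.card S with hn
  have hn2 : 2 ≤ n := by
    rw [hn]
    exact Fintype.one_lt_card_iff.mpr ⟨⟨a, haS⟩, ⟨b, hbS⟩, by simp [hab]⟩
  set e : S ≃ Fin n := Fintype.equivFin S with he
  -- pairwise moves exist
  have hpair : ∀ x y : Λ, x ∈ S → y ∈ S → ∃ g : G,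
      g • x = (if x ∈ F₃ then g₁ • x else x) ∧
      g • y = (if y ∈ F₃ then g₁ • y else y) := by
    intro x y hx hy
    have key : ∀ z : Λ, z ∈ S → z ∉ F₃ →
        (g₁ • z = z ∨ g₂ • z = z) := by
      intro z hz hz3
      rcases hz with (hz1 | hz2) | hz3'
      · exact Or.inl (hfix₁ z hz1)
      · exact Or.inr (hfix₂ z hz2)
      · exact absurd hz3' hz3
    by_cases hx3 : x ∈ F₃ <;> by_cases hy3 : y ∈ F₃
    · exact ⟨g₁, by rw [if_pos hx3], by rw [if_pos hy3]⟩
    · rcases key y hy hy3 with h1 | h2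
      · exact ⟨g₁, by rw [if_pos hx3], by rw [if_neg hy3]; exact h1⟩
      · exact ⟨g₂, by rw [if_pos hx3]; exact hA x hx3,
          by rw [if_neg hy3]; exact h2⟩
    · rcases key x hx hx3 with h1 | h2
      · exact ⟨g₁, by rw [if_neg hx3]; exact h1, by rw [if_pos hy3]⟩
      · exact ⟨g₂, by rw [if_neg hx3]; exact h2,
          by rw [if_pos hy3]; exact hA y hy3⟩
    · exact ⟨1, by rw [if_neg hx3]; exact one_smul _ _,
        by rw [if_neg hy3]; exact one_smul _ _⟩
  -- apply binarity
  obtain ⟨h, hh⟩ := hbin n hn2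
    (fun i => ((e.symm i : S) : Λ))
    (fun i => if ((e.symm i : S) : Λ) ∈ F₃ then g₁ • ((e.symm i : S) : Λ)
      else ((e.symm i : S) : Λ))
    (by
      intro k hk
      obtain ⟨g, hgx, hgy⟩ := hpair ((e.symm (k 0) : S) : Λ) ((e.symm (k 1) : S) : Λ)
        (e.symm (k 0)).2 (e.symm (k 1)).2
      refine ⟨g, fun i => ?_⟩
      fin_cases i
      · exact hgx
      · exact hgy)
    id strictMono_id
  have hhx : ∀ x ∈ S, h • x = if x ∈ F₃ then g₁ • x else x := by
    intro x hx
    have := hh (e ⟨x, hx⟩)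
    simpa using this
  refine ⟨h, ?_, ?_, ?_⟩
  · intro x hx
    rw [hhx x (Or.inr hx), if_pos hx]
  · rintro x ⟨hxS, hx3⟩
    rw [hhx x hxS, if_neg hx3]
  · constructor
    · intro x hx
      have hx1 : x ∈ F₁ := hF₁ ▸ hx
      have hxS : x ∈ S := Or.inl (Or.inl hx1)
      rw [MulAction.mem_fixedBy, hhx x hxS]
      by_cases hx3 : x ∈ F₃
      · rw [if_pos hx3]; exact hfix₁ x hx1
      · rw [if_neg hx3]
    · intro hsub
      have haFix : a ∈ MulAction.fixedBy Λ h := by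
        rw [MulAction.mem_fixedBy, hhx a haS, if_neg haF₃]
      have ha1 : a ∈ F₁ := hF₁ ▸ hsub haFix
      exact haF₃ (hB a ha1 haF₂)
end

section
/- Let G be a finite group acting transitively on a finite set Ω, let H be the stabilizer of a point of Ω, let p be a prime dividing |H|, let D be a union of conjugacy classes of G each consisting of elements of order p of maximal p-fixity, and let g ∈ H ∩ D. If the action of G on Ω is binary, then every element of Δ(g, D) of order p is an element of maximal p-fixity. -/
open MulAction

/-- From pairwise realizability to global realizability, using binarity. -/
lemma exists_realize {G Ω : Type*} [Group G] [MulAction G Ω]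
    (hbin : IsBinary G Ω) (s : Finset Ω) (π : Ω → Ω)
    (hpair : ∀ x ∈ s, ∀ y ∈ s, ∃ e : G, e • x = π x ∧ e • y = π y) :
    ∃ z : G, ∀ x ∈ s, z • x = π x := by
  rcases Nat.lt_or_ge s.card 2 with hc | hc
  · have h1 : ∀ x ∈ s, ∀ y ∈ s, x = y := Finset.card_le_one.mp (Nat.lt_succ_iff.mp hc)
    by_cases hne : s.Nonempty
    · obtain ⟨x, hx⟩ := hne
      obtain ⟨e, he, -⟩ := hpair x hx x hx
      exact ⟨e, fun y hy => by rw [h1 y hy x hx]; exact he⟩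
    · exact ⟨1, fun x hx => absurd ⟨x, hx⟩ hne⟩
  · set n := s.card with hn
    set E := s.equivFin with hE
    set I : Fin n → Ω := fun i => ((E.symm i : s) : Ω) with hI
    have hImem : ∀ i, I i ∈ s := fun i => (E.symm i).2
    have h2 : Related G 2 I (π ∘ I) := by
      intro k hk
      obtain ⟨e, h0, h1⟩ := hpair (I (k 0)) (hImem _) (I (k 1)) (hImem _)
      refine ⟨e, fun i => ?_⟩
      fin_cases i
      · exact h0
      · exact h1
    obtain ⟨z, hz⟩ := hbin n hc I (π ∘ I) h2 id strictMono_id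
    refine ⟨z, fun x hx => ?_⟩
    have := hz (E ⟨x, hx⟩)
    simpa [I] using this
lemma fixed_of_pow {G Ω : Type*} [Group G] [MulAction G Ω] {z : G} {ω : Ω}
    (h : z • ω = ω) (m : ℕ) : z ^ m • ω = ω := by
  induction m with
  | zero => simp
  | succ m ih => rw [pow_succ', mul_smul, ih, h]

lemma p_dvd_orderOf' {G Ω : Type*} [Group G] [MulAction G Ω]
    {p : ℕ} (hp : p.Prime) {k z : G} {Y : Set Ω}
    (hk : orderOf k = p)
    (hYc : ∀ y ∈ Y, k • y ∈ Y) (hz : ∀ y ∈ Y, z • y = k • y)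
    {y : Ω} (hy : y ∈ Y) (hky : k • y ≠ y) : p ∣ orderOf z := by
  have key : ∀ i : ℕ, k ^ i • y ∈ Y ∧ z ^ i • y = k ^ i • y := by
    intro i
    induction i with
    | zero => simpa using hy
    | succ i ih =>
      constructor
      · rw [pow_succ', mul_smul]
        exact hYc _ ih.1
      · rw [pow_succ', pow_succ', mul_smul, mul_smul, ih.2, hz _ ih.1]
  have hper : MulAction.period k y = p := by
    have hd := MulAction.period_dvd_orderOf k y
    rw [hk] at hd
    rcases hp.eq_one_or_self_of_dvd _ hd with h | h
    · exact absurd (MulAction.period_eq_one_iff.mp h) hky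
    · exact h
  have hzn : k ^ orderOf z • y = y := by
    have h := (key (orderOf z)).2
    rw [pow_orderOf_eq_one, one_smul] at h
    exact h.symm
  have := MulAction.pow_smul_eq_iff_period_dvd.mp hzn
  rwa [hper] at this
lemma adj_fixedBy {G Ω : Type*} [Group G] [Fintype G] [Fintype Ω] [MulAction G Ω]
    {p : ℕ} (hp : p.Prime) {D : Set G}
    (hDfix : ∀ x ∈ D, MaxPFixity G Ω p x) (hbin : IsBinary G Ω)
    {a b : G} (hadj : (classGraph D).Adj a b) :
    fixedBy Ω a = fixedBy Ω b := by
  classical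
  obtain ⟨hne, ha, hb, hcomm, hd⟩ := hadj
  have hfix_ncard : ∀ w : G, fixity G Ω w = (fixedBy Ω w).ncard := fun w =>
    Nat.card_coe_set_eq _
  have hfab : fixity G Ω a = fixity G Ω b :=
    le_antisymm ((hDfix b hb).2 a (hDfix a ha).1) ((hDfix a ha).2 b (hDfix b hb).1)
  set k := a * b⁻¹ with hkdef
  have hko : orderOf k = p ∧ fixity G Ω k = fixity G Ω a := by
    rcases hd with h | h
    · exact ⟨(hDfix _ h).1,
        le_antisymm ((hDfix a ha).2 _ (hDfix _ h).1) ((hDfix _ h).2 a (hDfix a ha).1)⟩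
    · have hinv : (b * a⁻¹)⁻¹ = k := by rw [hkdef]; group
      have h1 : orderOf k = p := by rw [← hinv, orderOf_inv]; exact (hDfix _ h).1
      have h2 : fixity G Ω k = fixity G Ω (b * a⁻¹) := by
        unfold fixity
        rw [← hinv, MulAction.fixedBy_inv]
      rw [h2]
      exact ⟨h1,
        le_antisymm ((hDfix a ha).2 _ (hDfix _ h).1) ((hDfix _ h).2 a (hDfix a ha).1)⟩
  set Fa := fixedBy Ω a with hFa
  set Fb := fixedBy Ω b with hFb
  set Fk := fixedBy Ω k with hFk
  have hka : Commute k a := Commute.mul_left (Commute.refl a) hcomm.symm.inv_left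
  have hkb : Commute k b := Commute.mul_left hcomm (Commute.refl b).inv_left
  have hak : ∀ ω ∈ Fb, k • ω = a • ω := by
    intro ω hω
    have hb' : b⁻¹ • ω = ω := by
      rw [inv_smul_eq_iff]; exact hω.symm
    rw [hkdef, mul_smul, hb']
  have hsub2 : Fb ∩ Fk ⊆ Fa := by
    rintro ω ⟨h1, h2⟩
    have : a • ω = ω := by rw [← hak ω h1]; exact h2
    exact this
  have hsub3 : Fa ∩ Fk ⊆ Fb := by
    rintro ω ⟨h1, h2⟩
    have hb' : b • ω = (k⁻¹ * a) • ω := by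
      rw [hkdef]; group
    have hk' : k⁻¹ • ω = ω := by rw [inv_smul_eq_iff]; exact h2.symm
    show b • ω = ω
    rw [hb', mul_smul, h1, hk']
  set Y := Fb \ Fa with hY
  have hYc : ∀ y ∈ Y, k • y ∈ Y := by
    rintro y ⟨h1, h2⟩
    constructor
    · show b • k • y = k • y
      rw [← mul_smul, ← hkb.eq, mul_smul, h1]
    · intro hcon
      have : a • k • y = k • y := hcon
      rw [← mul_smul, ← hka.eq, mul_smul] at this
      exact h2 (smul_left_cancel k this)
  have hYk : ∀ y ∈ Y, k • y ≠ y := by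
    rintro y ⟨h1, h2⟩ hcon
    exact h2 (hsub2 ⟨h1, hcon⟩)
  by_cases hYn : Y.Nonempty
  · by_cases hX : (Fa \ Fb).Nonempty
    · exfalso
      -- the main binary argument
      set S : Finset Ω := (Set.toFinite (Fa ∪ Fk ∪ Y)).toFinset with hS
      set π : Ω → Ω := fun ω => if ω ∈ Y then k • ω else ω with hπ
      have hπY : ∀ ω ∈ Y, π ω = k • ω := fun ω h => by
        simp only [hπ, if_pos h]
      have hπn : ∀ ω, ω ∉ Y → π ω = ω := fun ω h => by
        simp only [hπ, if_neg h]
      have hpair : ∀ x ∈ S, ∀ y ∈ S, ∃ e : G, e • x = π x ∧ e • y = π y := by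
        intro x hx y hy
        rw [hS, Set.Finite.mem_toFinset] at hx hy
        by_cases hxY : x ∈ Y <;> by_cases hyY : y ∈ Y
        · exact ⟨k, by rw [hπY x hxY], by rw [hπY y hyY]⟩
        · -- x ∈ Y, y ∉ Y hence y ∈ Fa ∪ Fk
          have hy' : y ∈ Fa ∪ Fk := by
            rcases hy with h | h
            · exact h
            · exact absurd h hyY
          rcases hy' with h | h
          · exact ⟨a, by rw [hπY x hxY, hak x hxY.1], by rw [hπn y hyY]; exact h⟩
          · exact ⟨k, by rw [hπY x hxY], by rw [hπn y hyY]; exact h⟩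
        · have hx' : x ∈ Fa ∪ Fk := by
            rcases hx with h | h
            · exact h
            · exact absurd h hxY
          rcases hx' with h | h
          · exact ⟨a, by rw [hπn x hxY]; exact h, by rw [hπY y hyY, hak y hyY.1]⟩
          · exact ⟨k, by rw [hπn x hxY]; exact h, by rw [hπY y hyY]⟩
        · exact ⟨1, by rw [hπn x hxY, one_smul], by rw [hπn y hyY, one_smul]⟩
      obtain ⟨z, hz⟩ := exists_realize hbin S π hpair
      have hzfix : ∀ ω ∈ Fa ∪ Fk, z • ω = ω := by
        intro ω hω
        have hωY : ω ∉ Y := by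
          intro hωY
          rcases hω with h | h
          · exact hωY.2 h
          · exact hωY.2 (hsub2 ⟨hωY.1, h⟩)
        have := hz ω (by rw [hS, Set.Finite.mem_toFinset]; exact Or.inl hω)
        rwa [hπn ω hωY] at this
      have hzY : ∀ y ∈ Y, z • y = k • y := by
        intro y hy
        have := hz y (by rw [hS, Set.Finite.mem_toFinset]; exact Or.inr hy)
        rwa [hπY y hy] at this
      obtain ⟨y₀, hy₀⟩ := hYn
      have pdvd : p ∣ orderOf z := p_dvd_orderOf' hp hko.1 hYc hzY hy₀ (hYk _ hy₀)
      set ζ := z ^ (orderOf z / p) with hζ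
      have hordζ : orderOf ζ = p := by
        rw [hζ, orderOf_pow, Nat.gcd_eq_right (Nat.div_dvd_of_dvd pdvd),
          Nat.div_div_self pdvd (orderOf_pos z).ne']
      have hζfix : ∀ ω ∈ Fa ∪ Fk, ζ • ω = ω := fun ω h => fixed_of_pow (hzfix ω h) _
      obtain ⟨x₀, hx₀⟩ := hX
      have hx₀k : x₀ ∉ Fk := fun h => hx₀.2 (hsub3 ⟨hx₀.1, h⟩)
      have hsubζ : insert x₀ Fk ⊆ fixedBy Ω ζ := by
        intro ω hω
        rcases Set.mem_insert_iff.mp hω with h | h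
        · subst h; exact hζfix ω (Or.inl hx₀.1)
        · exact hζfix ω (Or.inr h)
      have hle : fixity G Ω ζ ≤ fixity G Ω a := (hDfix a ha).2 ζ hordζ
      have hge : fixity G Ω a + 1 ≤ fixity G Ω ζ := by
        rw [← hko.2, hfix_ncard, hfix_ncard]
        calc (fixedBy Ω k).ncard + 1 = (insert x₀ Fk).ncard :=
              (Set.ncard_insert_of_notMem hx₀k (Set.toFinite _)).symm
          _ ≤ (fixedBy Ω ζ).ncard := Set.ncard_le_ncard hsubζ (Set.toFinite _)
      omega
    · -- Fa ⊆ Fb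
      have hsub : Fa ⊆ Fb := Set.diff_eq_empty.mp (Set.not_nonempty_iff_eq_empty.mp hX)
      refine Set.eq_of_subset_of_ncard_le hsub ?_ (Set.toFinite _)
      rw [← hfix_ncard, ← hfix_ncard, hfab]
  · -- Fb ⊆ Fa
    have hsub : Fb ⊆ Fa := Set.diff_eq_empty.mp (Set.not_nonempty_iff_eq_empty.mp hYn)
    refine (Set.eq_of_subset_of_ncard_le hsub ?_ (Set.toFinite _)).symm
    rw [← hfix_ncard, ← hfix_ncard, hfab]

theorem stmt3 {G Ω : Type*} [Group G] [Fintype G] [Fintype Ω] [MulAction G Ω]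
    [MulAction.IsPretransitive G Ω] (ω : Ω)
    (p : ℕ) (hp : p.Prime)
    (hdvd : p ∣ Nat.card (MulAction.stabilizer G ω))
    (D : Set G) (hD : IsUnionConjClasses D)
    (hDfix : ∀ x ∈ D, MaxPFixity G Ω p x)
    (g : G) (hgH : g ∈ MulAction.stabilizer G ω) (hgD : g ∈ D)
    (hbin : IsBinary G Ω) :
    ∀ x ∈ Delta g D, orderOf x = p → MaxPFixity G Ω p x := by
  intro x hx hxo
  have key : ∀ u v : G, (classGraph D).Reachable u v → fixedBy Ω u = fixedBy Ω v := by
    intro u v huv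
    obtain ⟨w⟩ := huv
    induction w with
    | nil => rfl
    | cons hadj _ ih => rw [adj_fixedBy hp hDfix hbin hadj, ih]
  have hDel : ∀ y ∈ Delta g D, ∀ μ ∈ fixedBy Ω g, y • μ = μ := by
    intro y hy
    have hle : Delta g D ≤ ⨅ μ ∈ fixedBy Ω g, MulAction.stabilizer G μ := by
      rw [Delta]
      refine (Subgroup.closure_le _).mpr ?_
      rintro h' ⟨hh'D, hreach⟩
      rw [SetLike.mem_coe, Subgroup.mem_iInf]
      intro μ
      rw [Subgroup.mem_iInf]
      intro hμ
      rw [MulAction.mem_stabilizer_iff]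
      have heq := key g h' hreach
      rw [heq] at hμ
      exact hμ
    intro μ hμ
    have := hle hy
    rw [Subgroup.mem_iInf] at this
    have := this μ
    rw [Subgroup.mem_iInf] at this
    exact this hμ
  have hsub : fixedBy Ω g ⊆ fixedBy Ω x := fun μ hμ => hDel x hx μ hμ
  have hgx : fixity G Ω g ≤ fixity G Ω x := by
    rw [fixity, fixity, Nat.card_coe_set_eq, Nat.card_coe_set_eq]
    exact Set.ncard_le_ncard hsub (Set.toFinite _)
  exact ⟨hxo, fun h hh => le_trans ((hDfix g hgD).2 h hh) hgx⟩
end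

section
/- Let G be a finite group acting transitively on a finite set Ω, let H be the stabilizer of a point of Ω, let p be a prime dividing |H|, let D be a union of conjugacy classes of G each consisting of elements of order p of maximal p-fixity, and let g ∈ H ∩ D. If the action of G on Ω is binary, then H contains Δ_∞(g, D). In particular, if g ∈ H is any element of maximal p-fixity, then H contains the terminal component group Δ_∞(g). -/
open MulAction Pointwise

section Aux
variable {G Ω : Type*} [Group G] [MulAction G Ω]

lemma fixity_eq_ncard (u : G) : fixity G Ω u = (fixedBy Ω u).ncard :=
  Nat.card_coe_set_eq _

lemma fixedBy_inv_eq' (u : G) : fixedBy Ω u⁻¹ = fixedBy Ω u := by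
  ext a
  simp only [MulAction.mem_fixedBy]
  rw [inv_smul_eq_iff, eq_comm]

lemma fixity_inv_eq (u : G) : fixity G Ω u⁻¹ = fixity G Ω u := by
  unfold fixity; rw [fixedBy_inv_eq']

lemma fixedBy_conj'_s4 (u c : G) : fixedBy Ω (c * u * c⁻¹) = c • fixedBy Ω u := by
  ext a
  simp only [MulAction.mem_fixedBy, Set.mem_smul_set_iff_inv_smul_mem, mul_smul]
  constructor
  · intro h
    rw [show u • c⁻¹ • a = c⁻¹ • c • u • c⁻¹ • a by rw [inv_smul_smul], h]
  · intro h
    rw [h, smul_inv_smul]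

lemma fixity_conj_eq {u v : G} (h : IsConj u v) : fixity G Ω u = fixity G Ω v := by
  obtain ⟨c, rfl⟩ := isConj_iff.mp h
  unfold fixity
  rw [fixedBy_conj'_s4, Nat.card_coe_set_eq, Nat.card_coe_set_eq, ← Set.image_smul,
    Set.ncard_image_of_injective _ (MulAction.injective c)]

lemma orderOf_conj_eq {u v : G} (h : IsConj u v) : orderOf u = orderOf v := by
  obtain ⟨c, hc⟩ := h
  exact hc.orderOf_eq

end Aux

/-- The key lemma: in a binary action, two commuting elements whose "quotient" `z = x * y⁻¹`
also has maximal fixity must have the same fixed-point sets. -/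
lemma key {G Ω : Type*} [Group G] [Fintype G] [Fintype Ω] [MulAction G Ω]
    (hbin : IsBinary G Ω) {p : ℕ} (hp : p.Prime)
    {x y z : G} (hcomm : Commute x y) (hzy : z = x * y⁻¹) (hxp : orderOf x = p)
    (hmax : ∀ u : G, orderOf u = p → fixity G Ω u ≤ fixity G Ω x)
    (hfy : fixity G Ω y = fixity G Ω x)
    (hfz : fixity G Ω z = fixity G Ω x) :
    fixedBy Ω x = fixedBy Ω y := by
  classical
  by_contra hne
  have hxz : x = z * y := by rw [hzy]; group
  have hyz_comm : Commute y z := by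
    rw [hzy]; exact hcomm.symm.mul_right (Commute.refl y).inv_right
  have hxz_comm : Commute x z := by
    rw [hzy]; exact (Commute.refl x).mul_right hcomm.inv_right
  -- if `v • a = a` and `Commute u v` then `v • (u • a) = u • a`
  have smul_mem_fixed : ∀ (u v : G), Commute u v → ∀ a : Ω, v • a = a → v • (u • a) = u • a := by
    intro u v huv a ha
    rw [← mul_smul, ← huv.eq, mul_smul, ha]
  -- on `Fix z`, `y` and `x` agree
  have hy_eq_x : ∀ a : Ω, z • a = a → y • a = x • a := by
    intro a ha
    have h1 : z • (y • a) = y • a := smul_mem_fixed y z hyz_comm a ha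
    rw [hxz, mul_smul, h1]
  -- `Fix x ⊄ Fix y`
  have hysub : ¬ fixedBy Ω x ⊆ fixedBy Ω y := by
    intro hsub
    refine hne (Set.eq_of_subset_of_ncard_le hsub ?_ (Set.toFinite _))
    rw [← fixity_eq_ncard, ← fixity_eq_ncard, hfy]
  -- `Fix z ∩ Fix y ⊆ Fix x`
  have hzyx : ∀ a : Ω, z • a = a → y • a = a → x • a = a := by
    intro a hza hya
    rw [hxz, mul_smul, hya, hza]
  -- `c < f`
  have hclt : (fixedBy Ω x ∩ fixedBy Ω y).ncard < fixity G Ω x := by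
    rcases lt_or_eq_of_le (show (fixedBy Ω x ∩ fixedBy Ω y).ncard ≤ fixity G Ω x by
      rw [fixity_eq_ncard]
      exact Set.ncard_le_ncard Set.inter_subset_left (Set.toFinite _)) with h | h
    · exact h
    · exfalso
      apply hysub
      have : fixedBy Ω x ∩ fixedBy Ω y = fixedBy Ω x := by
        refine Set.eq_of_subset_of_ncard_le Set.inter_subset_left ?_ (Set.toFinite _)
        rw [← fixity_eq_ncard, ← h]
      rw [← this]
      exact Set.inter_subset_right
  -- `Z' := Fix z \ Fix x` is nonempty
  have hZne : (fixedBy Ω z \ fixedBy Ω x).Nonempty := by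
    rw [Set.diff_nonempty]
    intro hsub
    have heq : fixedBy Ω z = fixedBy Ω x := by
      refine Set.eq_of_subset_of_ncard_le hsub ?_ (Set.toFinite _)
      rw [← fixity_eq_ncard, ← fixity_eq_ncard, hfz]
    apply hysub
    intro a ha
    have haz : z • a = a := by
      have : a ∈ fixedBy Ω z := by rw [heq]; exact ha
      exact this
    have := hy_eq_x a haz
    rw [MulAction.mem_fixedBy, this]
    exact ha
  -- set up the tuple over S = Fix x ∪ Fix y ∪ Fix z
  set S : Set Ω := fixedBy Ω x ∪ fixedBy Ω y ∪ fixedBy Ω z with hS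
  have hSfin : S.Finite := Set.toFinite _
  set F : Finset Ω := hSfin.toFinset with hF
  set n : ℕ := F.card with hn
  set e : {a // a ∈ F} ≃ Fin n := F.equivFin with he
  set I : Fin n → Ω := fun i => ((e.symm i : {a // a ∈ F}) : Ω) with hI
  have hImem : ∀ i, I i ∈ S := fun i => hSfin.mem_toFinset.mp (e.symm i).2
  have hIsurj : ∀ s ∈ S, ∃ i, I i = s := by
    intro s hs
    refine ⟨e ⟨s, hSfin.mem_toFinset.mpr hs⟩, ?_⟩
    simp [hI]
  set J : Fin n → Ω := fun i =>
    if I i ∈ fixedBy Ω x ∪ fixedBy Ω y then I i else x • I i with hJ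
  -- witnesses for single coordinates
  have sat1 : ∀ j, I j ∈ fixedBy Ω x ∪ fixedBy Ω y → (1 : G) • I j = J j := by
    intro j hj
    rw [hJ]; simp only [if_pos hj, one_smul]
  have hJz : ∀ j, I j ∉ fixedBy Ω x ∪ fixedBy Ω y → J j = x • I j ∧ z • I j = I j := by
    intro j hj
    constructor
    · rw [hJ]; simp only [if_neg hj]
    · rcases hImem j with (h | h) | h
      · exact absurd (Or.inl h) hj
      · exact absurd (Or.inr h) hj
      · exact h
  have satx : ∀ j, I j ∉ fixedBy Ω y \ fixedBy Ω x → x • I j = J j := by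
    intro j hj
    by_cases h1 : I j ∈ fixedBy Ω x
    · simp only [hJ]
      rw [if_pos (show I j ∈ fixedBy Ω x ∪ fixedBy Ω y from Or.inl h1)]
      exact h1
    · by_cases h2 : I j ∈ fixedBy Ω y
      · exact absurd ⟨h2, h1⟩ hj
      · have := hJz j (by rintro (h | h) <;> [exact h1 h; exact h2 h])
        rw [this.1]
  have saty : ∀ j, I j ∉ fixedBy Ω x \ fixedBy Ω y → y • I j = J j := by
    intro j hj
    by_cases h2 : I j ∈ fixedBy Ω y
    · simp only [hJ]
      rw [if_pos (show I j ∈ fixedBy Ω x ∪ fixedBy Ω y from Or.inr h2)]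
      exact h2
    · by_cases h1 : I j ∈ fixedBy Ω x
      · exact absurd ⟨h1, h2⟩ hj
      · have hz := hJz j (by rintro (h | h) <;> [exact h1 h; exact h2 h])
        rw [hz.1]
        exact hy_eq_x _ hz.2
  -- pairwise witnesses
  have pairWit : ∀ j₁ j₂ : Fin n, ∃ g : G, g • I j₁ = J j₁ ∧ g • I j₂ = J j₂ := by
    intro j₁ j₂
    by_cases m1 : I j₁ ∈ fixedBy Ω x ∪ fixedBy Ω y
    · by_cases m2 : I j₂ ∈ fixedBy Ω x ∪ fixedBy Ω y
      · exact ⟨1, sat1 j₁ m1, sat1 j₂ m2⟩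
      · rcases m1 with h1 | h1
        · exact ⟨x, satx j₁ (fun hd => hd.2 h1), satx j₂ (fun hd => m2 (Or.inr hd.1))⟩
        · exact ⟨y, saty j₁ (fun hd => hd.2 h1), saty j₂ (fun hd => m2 (Or.inl hd.1))⟩
    · by_cases m2 : I j₂ ∈ fixedBy Ω x ∪ fixedBy Ω y
      · rcases m2 with h2 | h2
        · exact ⟨x, satx j₁ (fun hd => m1 (Or.inr hd.1)), satx j₂ (fun hd => hd.2 h2)⟩
        · exact ⟨y, saty j₁ (fun hd => m1 (Or.inl hd.1)), saty j₂ (fun hd => hd.2 h2)⟩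
      · exact ⟨x, satx j₁ (fun hd => m1 (Or.inr hd.1)), satx j₂ (fun hd => m2 (Or.inr hd.1))⟩
  have hrel2 : Related G 2 I J := by
    intro k _
    obtain ⟨g, h1, h2⟩ := pairWit (k 0) (k 1)
    exact ⟨g, Fin.forall_fin_two.mpr ⟨h1, h2⟩⟩
  -- n ≥ 2
  obtain ⟨ζ, hζ⟩ := hZne
  have hxne : (fixedBy Ω x).Nonempty := by
    rw [← Set.ncard_pos (Set.toFinite _), ← fixity_eq_ncard]
    omega
  obtain ⟨ξ, hξ⟩ := hxne
  have hn2 : 2 ≤ n := by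
    rw [hn]
    refine Finset.one_lt_card.mpr ⟨ξ, ?_, ζ, ?_, ?_⟩
    · exact hSfin.mem_toFinset.mpr (Or.inl (Or.inl hξ))
    · exact hSfin.mem_toFinset.mpr (Or.inr hζ.1)
    · rintro rfl; exact hζ.2 hξ
  -- apply binarity
  obtain ⟨h, hh⟩ := hbin n hn2 I J hrel2 (fun i => i) strictMono_id
  have hfixh : ∀ s ∈ fixedBy Ω x ∪ fixedBy Ω y, h • s = s := by
    intro s hs
    obtain ⟨i, rfl⟩ := hIsurj s (by rcases hs with h1 | h1; exacts [Or.inl (Or.inl h1), Or.inl (Or.inr h1)])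
    rw [hh i, hJ]
    simp only [if_pos hs]
  have hhz : ∀ a ∈ fixedBy Ω z \ fixedBy Ω x, h • a = x • a := by
    intro a ha
    have hnm : a ∉ fixedBy Ω x ∪ fixedBy Ω y := by
      rintro (h1 | h1)
      · exact ha.2 h1
      · exact ha.2 (hzyx a ha.1 h1)
    obtain ⟨i, rfl⟩ := hIsurj a (Or.inr ha.1)
    rw [hh i, hJ]
    simp only [if_neg hnm]
  -- x preserves Z'
  have hxpres : ∀ a ∈ fixedBy Ω z \ fixedBy Ω x, x • a ∈ fixedBy Ω z \ fixedBy Ω x := by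
    intro a ha
    refine ⟨smul_mem_fixed x z hxz_comm a ha.1, ?_⟩
    intro hfx
    exact ha.2 (MulAction.injective x hfx)
  have hpow : ∀ m : ℕ, ∀ a ∈ fixedBy Ω z \ fixedBy Ω x,
      x ^ m • a ∈ fixedBy Ω z \ fixedBy Ω x ∧ h ^ m • a = x ^ m • a := by
    intro m
    induction m with
    | zero => intro a ha; simpa using ha
    | succ m ih =>
      intro a ha
      obtain ⟨ih1, ih2⟩ := ih a ha
      constructor
      · rw [pow_succ', mul_smul]
        exact hxpres _ ih1
      · rw [pow_succ', pow_succ', mul_smul, mul_smul, ih2, hhz _ ih1]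
  set N : ℕ := orderOf h with hN
  have hN0 : N ≠ 0 := (orderOf_pos h).ne'
  have hxN : x ^ N • ζ = ζ := by
    rw [← (hpow N ζ hζ).2, pow_orderOf_eq_one, one_smul]
  -- p divides N
  have hpN : p ∣ N := by
    by_contra hnd
    have hco : Nat.Coprime p N := hp.coprime_iff_not_dvd.mpr hnd
    have hb := Nat.gcd_eq_gcd_ab p N
    rw [hco] at hb
    have hx1 : x ^ (N : ℤ) ∈ MulAction.stabilizer G ζ := by
      rw [zpow_natCast]
      exact MulAction.mem_stabilizer_iff.mpr hxN
    have hx2 : x ^ (p : ℤ) = 1 := by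
      rw [zpow_natCast, ← hxp, pow_orderOf_eq_one]
    have hexp : (1 : ℤ) = (N : ℤ) * Nat.gcdB p N + (p : ℤ) * Nat.gcdA p N := by
      push_cast at hb
      linarith
    have hxs : x ∈ MulAction.stabilizer G ζ := by
      have hxeq : x = (x ^ (N : ℤ)) ^ Nat.gcdB p N * (x ^ (p : ℤ)) ^ Nat.gcdA p N := by
        rw [← zpow_mul, ← zpow_mul, ← zpow_add, ← hexp, zpow_one]
      rw [hxeq, hx2, one_zpow, mul_one]
      exact Subgroup.zpow_mem _ hx1 _
    exact hζ.2 (MulAction.mem_stabilizer_iff.mp hxs)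
  -- the element w = h ^ (N / p) has order p and fixes Fix x ∪ Fix y pointwise
  have hdvd' : N / p ∣ N := Nat.div_dvd_of_dvd hpN
  have hordw : orderOf (h ^ (N / p)) = p := by
    rw [orderOf_pow, ← hN, Nat.gcd_eq_right hdvd', Nat.div_div_self hpN hN0]
  have hfixw : fixedBy Ω x ∪ fixedBy Ω y ⊆ fixedBy Ω (h ^ (N / p)) := by
    intro s hs
    have : h ∈ MulAction.stabilizer G s := MulAction.mem_stabilizer_iff.mpr (hfixh s hs)
    exact MulAction.mem_stabilizer_iff.mp (Subgroup.pow_mem _ this _)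
  have hcard : (fixedBy Ω x ∪ fixedBy Ω y).ncard ≤ fixity G Ω x := by
    calc (fixedBy Ω x ∪ fixedBy Ω y).ncard
        ≤ (fixedBy Ω (h ^ (N / p))).ncard := Set.ncard_le_ncard hfixw (Set.toFinite _)
      _ = fixity G Ω (h ^ (N / p)) := (fixity_eq_ncard _).symm
      _ ≤ fixity G Ω x := hmax _ hordw
  have huni := Set.ncard_union_add_ncard_inter (fixedBy Ω x) (fixedBy Ω y)
    (Set.toFinite _) (Set.toFinite _)
  have hfx' : (fixedBy Ω x).ncard = fixity G Ω x := (fixity_eq_ncard x).symm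
  have hfy' : (fixedBy Ω y).ncard = fixity G Ω x := by rw [← fixity_eq_ncard, hfy]
  omega

/-- Along a walk in `Γ(D)`, where all elements of `D` have order `p` and maximal `p`-fixity,
the fixed-point sets are constant. -/
lemma walk_fixedBy {G Ω : Type*} [Group G] [Fintype G] [Fintype Ω] [MulAction G Ω]
    (hbin : IsBinary G Ω) {p : ℕ} (hp : p.Prime) {D : Set G}
    (hDall : ∀ u ∈ D, MaxPFixity G Ω p u) {a b : G} (w : (classGraph D).Walk a b) :
    fixedBy Ω a = fixedBy Ω b := by
  induction w with
  | nil => rfl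
  | @cons a c b hadj w ih =>
    refine Eq.trans ?_ ih
    obtain ⟨hne, haD, hcD, hcomm, hor⟩ := hadj
    obtain ⟨hap, hamax⟩ := hDall a haD
    obtain ⟨hcp, hcmax⟩ := hDall c hcD
    have hfc : fixity G Ω c = fixity G Ω a := le_antisymm (hamax c hcp) (hcmax a hap)
    rcases hor with hzD | hzD
    · obtain ⟨hzp, hzmax⟩ := hDall _ hzD
      exact key hbin hp hcomm rfl hap hamax hfc (le_antisymm (hamax _ hzp) (hzmax a hap))
    · obtain ⟨hzp, hzmax⟩ := hDall _ hzD
      have h1 : fixity G Ω (c * a⁻¹) = fixity G Ω a := le_antisymm (hamax _ hzp) (hzmax a hap)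
      have h2 : fixity G Ω (a * c⁻¹) = fixity G Ω a := by
        rw [show a * c⁻¹ = (c * a⁻¹)⁻¹ by group, fixity_inv_eq, h1]
      exact key hbin hp hcomm rfl hap hamax hfc h2

/-- The main lemma: under the hypotheses of the theorem (transitivity not needed),
`Δ_∞(g, D)` is contained in the stabilizer. -/
lemma deltaInf_le_stabilizer {G Ω : Type*} [Group G] [Fintype G] [Fintype Ω] [MulAction G Ω]
    (hbin : IsBinary G Ω) {p : ℕ} (hp : p.Prime) (D : Set G)
    (hDfix : ∀ x ∈ D, MaxPFixity G Ω p x) {g : G} (hgD : g ∈ D)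
    {ω : Ω} (hgH : g ∈ MulAction.stabilizer G ω) :
    DeltaInf g D p ≤ MulAction.stabilizer G ω := by
  have hgmax : MaxPFixity G Ω p g := hDfix g hgD
  -- the invariant: all elements of `D_i` have order `p` and maximal fixity, and `g ∈ D_i`
  have hQ : ∀ i : ℕ, (∀ u ∈ DSeq g D p i, MaxPFixity G Ω p u) ∧ g ∈ DSeq g D p i := by
    intro i
    induction i with
    | zero => exact ⟨hDfix, hgD⟩
    | succ i ih =>
      -- elements of `Δ(g, D_i)` fix all points of `fixedBy Ω g`
      have hDelta : ∀ u ∈ Delta g (DSeq g D p i), ∀ δ ∈ fixedBy Ω g, u • δ = δ := by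
        intro u hu δ hδ
        have hle : Delta g (DSeq g D p i) ≤ MulAction.stabilizer G δ := by
          apply (Subgroup.closure_le _).mpr
          rintro v ⟨hvD, hreach⟩
          obtain ⟨w⟩ := hreach
          have hfix : fixedBy Ω g = fixedBy Ω v := walk_fixedBy hbin hp ih.1 w
          have : δ ∈ fixedBy Ω v := hfix ▸ hδ
          exact this
        exact hle hu
      constructor
      · rintro u ⟨hup, y₀, hy₀, hconj⟩
        have hyp : orderOf y₀ = p := by rw [← orderOf_conj_eq hconj, hup]
        have hfixsub : fixedBy Ω g ⊆ fixedBy Ω y₀ := fun δ hδ => hDelta y₀ hy₀ δ hδ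
        have h1 : fixity G Ω g ≤ fixity G Ω y₀ := by
          rw [fixity_eq_ncard, fixity_eq_ncard]
          exact Set.ncard_le_ncard hfixsub (Set.toFinite _)
        refine ⟨hup, fun v hv => ?_⟩
        calc fixity G Ω v ≤ fixity G Ω g := hgmax.2 v hv
          _ ≤ fixity G Ω y₀ := h1
          _ = fixity G Ω u := (fixity_conj_eq hconj).symm
      · refine ⟨hgmax.1, g, ?_, IsConj.refl g⟩
        exact Subgroup.subset_closure ⟨ih.2, SimpleGraph.Reachable.refl g⟩
  -- conclude
  refine iSup_le fun i => ?_
  apply (Subgroup.closure_le _).mpr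
  rintro v ⟨hvD, hreach⟩
  obtain ⟨w⟩ := hreach
  have hfix : fixedBy Ω g = fixedBy Ω v := walk_fixedBy hbin hp (hQ i).1 w
  have hωg : ω ∈ fixedBy Ω g := hgH
  have : ω ∈ fixedBy Ω v := hfix ▸ hωg
  exact this

theorem stmt4 {G Ω : Type*} [Group G] [Fintype G] [Fintype Ω] [MulAction G Ω]
    [MulAction.IsPretransitive G Ω] (ω : Ω)
    (p : ℕ) (hp : p.Prime)
    (hdvd : p ∣ Nat.card (MulAction.stabilizer G ω))
    (D : Set G) (hD : IsUnionConjClasses D)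
    (hDfix : ∀ x ∈ D, MaxPFixity G Ω p x)
    (g : G) (hgH : g ∈ MulAction.stabilizer G ω) (hgD : g ∈ D)
    (hbin : IsBinary G Ω) :
    DeltaInf g D p ≤ MulAction.stabilizer G ω ∧
      ∀ g' ∈ MulAction.stabilizer G ω, MaxPFixity G Ω p g' →
        DeltaInfC g' p ≤ MulAction.stabilizer G ω := by
  constructor
  · exact deltaInf_le_stabilizer hbin hp D hDfix hgD hgH
  · intro g' hg'H hg'max
    refine deltaInf_le_stabilizer hbin hp {x | IsConj g' x} ?_ (IsConj.refl g') hg'H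
    intro x hx
    refine ⟨by rw [← orderOf_conj_eq hx, hg'max.1], fun v hv => ?_⟩
    rw [← fixity_conj_eq hx]
    exact hg'max.2 v hv
end

section
/- Let q = 2^a with a ≥ 2, and let G = Sp₄(q) be the symplectic group over F_q. Let t ∈ G be an involution with rank(t − 1) = 2 such that φ(x, tx) = 0 for all vectors x (i.e. t is a short root involution). Then the component group Δ(t) equals the short root subgroup {1 + c(t − 1) : c ∈ F_q}. -/
open Matrix in
/-- `Sp F n`: the symplectic group `Sp_{2n}(F)`. -/
abbrev Sp (n : ℕ) (F : Type*) [Field F] := Matrix.symplecticGroup (Fin n) F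

open Matrix

namespace Sp4Aux

variable {F : Type*} [Field F]

local notation "ix" => (Fin 2 ⊕ Fin 2)

abbrev Mat (F : Type*) [Field F] := Matrix (Fin 2 ⊕ Fin 2) (Fin 2 ⊕ Fin 2) F

/-- the quadratic form of a matrix vanishes -/
def Quad0 (A : Mat F) : Prop := ∀ x : (Fin 2 ⊕ Fin 2) → F, x ⬝ᵥ (A *ᵥ x) = 0

lemma quad_diag {A : Mat F} (h : Quad0 A) (i : ix) : A i i = 0 := by
  have := h (Pi.single i 1)
  simpa [Matrix.mulVec_single, single_dotProduct] using this

lemma quad_symm [CharP F 2] {A : Mat F} (h : Quad0 A) : Aᵀ = A := by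
  ext i j
  rcases eq_or_ne i j with rfl | hij
  · rfl
  · have hx := h (Pi.single j 1 + Pi.single i 1)
    have hd1 := quad_diag h i
    have hd2 := quad_diag h j
    simp only [Matrix.mulVec_add, Matrix.mulVec_single, add_dotProduct,
      single_dotProduct, dotProduct_add] at hx
    simp only [Pi.add_apply, Pi.smul_apply, op_smul_eq_mul, Matrix.col_apply, mul_one, one_mul] at hx
    rw [hd1, hd2] at hx
    have : A j i + A i j = 0 := by linear_combination hx
    rw [Matrix.transpose_apply]
    rw [add_eq_zero_iff_eq_neg] at this
    rw [this, CharTwo.neg_eq]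

lemma quad_of_symm_diag [CharP F 2] {A : Mat F} (hs : Aᵀ = A) (hd : ∀ i, A i i = 0) :
    Quad0 A := by
  intro x
  have hexp : x ⬝ᵥ (A *ᵥ x) = ∑ p : ix × ix, x p.1 * A p.1 p.2 * x p.2 := by
    rw [Fintype.sum_prod_type]
    simp only [dotProduct, Matrix.mulVec, Finset.mul_sum]
    exact Finset.sum_congr rfl fun i _ => Finset.sum_congr rfl fun j _ => by ring
  rw [hexp]
  apply Finset.sum_ninvolution (fun p => p.swap)
  · intro p
    have hsym : A p.2 p.1 = A p.1 p.2 := by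
      conv_lhs => rw [← hs]
      rfl
    rcases eq_or_ne p.1 p.2 with h | h
    · simp [Prod.swap, ← h, hd p.1, CharTwo.add_self_eq_zero]
    · simp only [Prod.fst_swap, Prod.snd_swap, hsym]
      have : x p.1 * A p.1 p.2 * x p.2 = x p.2 * A p.1 p.2 * x p.1 := by ring
      rw [← this, CharTwo.add_self_eq_zero]
  · intro p hp
    intro hcontra
    apply hp
    have : p.1 = p.2 := by
      have := congrArg Prod.fst hcontra
      simpa using this.symm
    rw [← this] at *
    simp [hd, this]
  · intro p; exact Finset.mem_univ _
  · intro p; exact Prod.swap_swap p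


section Jlemmas

variable [CharP F 2]

lemma J_symm : (Matrix.J (Fin 2) F)ᵀ = Matrix.J (Fin 2) F := by
  rw [Matrix.J_transpose, CharTwo.neg_eq]

omit [CharP F 2] in
lemma J_diag (i : ix) : Matrix.J (Fin 2) F i i = 0 := by
  cases i <;> simp [Matrix.J, Matrix.fromBlocks]

lemma J_quad : Quad0 (Matrix.J (Fin 2) F) := quad_of_symm_diag J_symm J_diag

lemma J_sq : Matrix.J (Fin 2) F * Matrix.J (Fin 2) F = 1 := by
  rw [Matrix.J_squared, CharTwo.neg_eq]

end Jlemmas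

/-- shift a matrix across a dot product -/
lemma dot_shift (M : Mat F) (z y : (Fin 2 ⊕ Fin 2) → F) :
    (M *ᵥ z) ⬝ᵥ y = z ⬝ᵥ (Mᵀ *ᵥ y) := by
  rw [dotProduct_comm, Matrix.dotProduct_mulVec, dotProduct_comm,
    Matrix.mulVec_transpose]

lemma dot_symm {A : Mat F} (hA : Aᵀ = A) (x y : (Fin 2 ⊕ Fin 2) → F) :
    x ⬝ᵥ (A *ᵥ y) = y ⬝ᵥ (A *ᵥ x) := by
  conv_lhs => rw [← hA]
  rw [← dot_shift, dotProduct_comm]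

lemma vec_zero_of_dot {n : ℕ} {v : Fin n → (Fin 2 ⊕ Fin 2) → F}
    (hsp : Submodule.span F (Set.range v) = ⊤) {w : (Fin 2 ⊕ Fin 2) → F}
    (h : ∀ i, v i ⬝ᵥ w = 0) : w = 0 := by
  have hall : ∀ z : (Fin 2 ⊕ Fin 2) → F, z ⬝ᵥ w = 0 := by
    intro z
    have hz : z ∈ Submodule.span F (Set.range v) := by rw [hsp]; trivial
    induction hz using Submodule.span_induction with
    | mem x hx => obtain ⟨i, rfl⟩ := hx; exact h i
    | zero => simp
    | add x y _ _ hx hy => rw [add_dotProduct, hx, hy, add_zero]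
    | smul a x _ hx => rw [smul_dotProduct, hx, smul_zero]
  funext i
  have := hall (Pi.single i 1)
  simpa [single_dotProduct] using this

lemma mat_eq_of_mulVec {n : ℕ} {v : Fin n → (Fin 2 ⊕ Fin 2) → F}
    (hsp : Submodule.span F (Set.range v) = ⊤) {A B : Mat F}
    (h : ∀ i, A *ᵥ v i = B *ᵥ v i) : A = B := by
  have hall : ∀ z : (Fin 2 ⊕ Fin 2) → F, A *ᵥ z = B *ᵥ z := by
    intro z
    have hz : z ∈ Submodule.span F (Set.range v) := by rw [hsp]; trivial
    induction hz using Submodule.span_induction with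
    | mem x hx => obtain ⟨i, rfl⟩ := hx; exact h i
    | zero => simp
    | add x y _ _ hx hy => rw [Matrix.mulVec_add, Matrix.mulVec_add, hx, hy]
    | smul a x _ hx => rw [Matrix.mulVec_smul, Matrix.mulVec_smul, hx]
  ext i j
  have := congrFun (hall (Pi.single j 1)) i
  simpa [Matrix.mulVec_single] using this

lemma mat_eq_of_dot {n : ℕ} {v : Fin n → (Fin 2 ⊕ Fin 2) → F}
    (hsp : Submodule.span F (Set.range v) = ⊤) {A B : Mat F}
    (h : ∀ i j, v i ⬝ᵥ (A *ᵥ v j) = v i ⬝ᵥ (B *ᵥ v j)) : A = B := by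
  apply mat_eq_of_mulVec hsp
  intro j
  have hw : A *ᵥ v j - B *ᵥ v j = 0 := by
    apply vec_zero_of_dot hsp
    intro i
    rw [dotProduct_sub, h i j, sub_self]
  exact sub_eq_zero.mp hw


/-- the matrix `t - 1` of a short root involution `t` -/
structure IsGood (N : Mat F) : Prop where
  sq : N * N = 0
  rk : N.rank = 2
  quad : Quad0 (Matrix.J (Fin 2) F * N)

lemma IsGood.symmJ [CharP F 2] {N : Mat F} (h : IsGood N) :
    (Matrix.J (Fin 2) F * N)ᵀ = Matrix.J (Fin 2) F * N := quad_symm h.quad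

lemma IsGood.tJ [CharP F 2] {N : Mat F} (h : IsGood N) :
    Nᵀ * Matrix.J (Fin 2) F = Matrix.J (Fin 2) F * N := by
  have := h.symmJ
  rw [Matrix.transpose_mul, J_symm] at this
  exact this

lemma IsGood.tJN [CharP F 2] {N : Mat F} (h : IsGood N) :
    Nᵀ * Matrix.J (Fin 2) F * N = 0 := by
  rw [h.tJ, Matrix.mul_assoc, h.sq, Matrix.mul_zero]

lemma finrank_V : Module.finrank F ((Fin 2 ⊕ Fin 2) → F) = 4 := by
  rw [Module.finrank_pi]; simp

lemma ker_eq_range {N : Mat F} (hsq : N * N = 0) (hrk : N.rank = 2) :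
    LinearMap.ker N.mulVecLin = LinearMap.range N.mulVecLin := by
  have hle : LinearMap.range N.mulVecLin ≤ LinearMap.ker N.mulVecLin := by
    rintro _ ⟨x, rfl⟩
    simp only [LinearMap.mem_ker, Matrix.mulVecLin_apply, Matrix.mulVec_mulVec, hsq,
      Matrix.zero_mulVec]
  have hrn := LinearMap.finrank_range_add_finrank_ker N.mulVecLin
  rw [finrank_V] at hrn
  have hr : Module.finrank F (LinearMap.range N.mulVecLin) = 2 := hrk
  symm
  apply Submodule.eq_of_le_of_finrank_le hle
  omega

lemma NP_zero [CharP F 2] {N P : Mat F} (hN : IsGood N) (hP : IsGood P)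
    (comm : N * P = P * N) (hq : Quad0 (Matrix.J (Fin 2) F * (N * P))) : N * P = 0 := by
  by_contra hne
  set A := Matrix.J (Fin 2) F * (N * P) with hA
  have hAne : A ≠ 0 := by
    intro h0
    apply hne
    have hJA : Matrix.J (Fin 2) F * A = N * P := by
      rw [hA, ← Matrix.mul_assoc, J_sq, Matrix.one_mul]
    rw [← hJA, h0, Matrix.mul_zero]
  have hAs : Aᵀ = A := quad_symm hq
  have hAd : ∀ i, A i i = 0 := quad_diag hq
  obtain ⟨i, j, hij⟩ : ∃ i j, A i j ≠ 0 := by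
    by_contra h
    push_neg at h
    exact hAne (by ext i j; simp [h])
  have hne_ij : i ≠ j := by rintro rfl; exact hij (hAd i)
  have hsym_ij : A j i = A i j := by
    conv_lhs => rw [← hAs]
    rfl
  -- two independent columns
  set v : Fin 2 → (Fin 2 ⊕ Fin 2) → F := ![fun k => A k i, fun k => A k j] with hv
  have hli : LinearIndependent F v := by
    rw [hv, linearIndependent_fin2]
    constructor
    · intro h0
      apply hij
      have := congrFun h0 i
      simpa using this
    · intro a h0
      have h1 := congrFun h0 i
      have h2 := congrFun h0 j
      simp only [Matrix.cons_val_zero, Matrix.cons_val_one, Matrix.head_cons, Pi.smul_apply,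
        smul_eq_mul] at h1 h2
      rw [hAd i] at h1
      rw [hAd j, mul_comm] at h2
      -- h1 : A i i = a * A i j  : 0 = a * A i j so a = 0
      have ha : a = 0 := by
        rcases mul_eq_zero.mp h1 with h | h
        · exact h
        · exact absurd h hij
      rw [ha, zero_mul] at h2
      rw [hsym_ij] at h2
      exact hij h2.symm
  have hsub : Submodule.span F (Set.range v) ≤ LinearMap.range A.mulVecLin := by
    rw [Submodule.span_le]
    rintro _ ⟨k, rfl⟩
    fin_cases k
    · exact ⟨Pi.single i 1, by funext l; simp [Matrix.mulVecLin_apply, Matrix.mulVec_single, hv]⟩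
    · exact ⟨Pi.single j 1, by funext l; simp [Matrix.mulVecLin_apply, Matrix.mulVec_single, hv]⟩
  have hr2 : 2 ≤ A.rank := by
    have h1 : Module.finrank F (Submodule.span F (Set.range v)) = 2 := by
      rw [finrank_span_eq_card hli]; simp
    rw [Matrix.rank]
    calc 2 = Module.finrank F (Submodule.span F (Set.range v)) := h1.symm
    _ ≤ Module.finrank F (LinearMap.range A.mulVecLin) := Submodule.finrank_mono hsub
  have hrNP : (N * P).rank = 2 := by
    have hle1 : (N * P).rank ≤ 2 := by
      have := Matrix.rank_mul_le_left N P
      rw [hN.rk] at this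
      exact this
    have hge : 2 ≤ (N * P).rank :=
      le_trans hr2 (by rw [hA]; exact Matrix.rank_mul_le_right _ _)
    omega
  -- range equalities
  have hrange1 : LinearMap.range (N * P).mulVecLin = LinearMap.range N.mulVecLin := by
    apply Submodule.eq_of_le_of_finrank_le
    · rw [Matrix.mulVecLin_mul]
      exact LinearMap.range_comp_le_range _ _
    · show Module.finrank F _ ≤ Module.finrank F _
      have h1 : Module.finrank F (LinearMap.range N.mulVecLin) = 2 := hN.rk
      have h2 : Module.finrank F (LinearMap.range (N * P).mulVecLin) = 2 := hrNP
      omega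
  have hrange2 : LinearMap.range (N * P).mulVecLin = LinearMap.range P.mulVecLin := by
    apply Submodule.eq_of_le_of_finrank_le
    · rw [comm, Matrix.mulVecLin_mul]
      exact LinearMap.range_comp_le_range _ _
    · show Module.finrank F _ ≤ Module.finrank F _
      have h1 : Module.finrank F (LinearMap.range P.mulVecLin) = 2 := hP.rk
      have h2 : Module.finrank F (LinearMap.range (N * P).mulVecLin) = 2 := hrNP
      omega
  -- now range P = range N = ker N, so N * P = 0
  have hzero : N * P = 0 := by
    ext k l
    have : (N * P) *ᵥ Pi.single l 1 = 0 := by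
      have hmem : P *ᵥ Pi.single l 1 ∈ LinearMap.range P.mulVecLin :=
        ⟨Pi.single l 1, rfl⟩
      rw [← hrange2, hrange1, ← ker_eq_range hN.sq hN.rk] at hmem
      rw [← Matrix.mulVec_mulVec]
      exact hmem
    have := congrFun this k
    simpa [Matrix.mulVec_single] using this
  exact hne hzero


lemma span4 [CharP F 2] {N : Mat F} (hN : IsGood N) {x₀ y₀ : (Fin 2 ⊕ Fin 2) → F}
    (hμ : y₀ ⬝ᵥ ((Matrix.J (Fin 2) F * N) *ᵥ x₀) ≠ 0) :
    LinearIndependent F ![x₀, y₀, N *ᵥ x₀, N *ᵥ y₀] ∧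
      Submodule.span F (Set.range ![x₀, y₀, N *ᵥ x₀, N *ᵥ y₀]) = ⊤ := by
  set JN := Matrix.J (Fin 2) F * N with hJN
  have hquad : ∀ z, z ⬝ᵥ (JN *ᵥ z) = 0 := hN.quad
  have hsymm : ∀ z w, z ⬝ᵥ (JN *ᵥ w) = w ⬝ᵥ (JN *ᵥ z) := dot_symm hN.symmJ
  have hJNN : ∀ z w, z ⬝ᵥ (JN *ᵥ (N *ᵥ w)) = 0 := by
    intro z w
    rw [Matrix.mulVec_mulVec, hJN, Matrix.mul_assoc, hN.sq, Matrix.mul_zero,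
      Matrix.zero_mulVec, dotProduct_zero]
  have key : ∀ a b : F, a • (N *ᵥ x₀) + b • (N *ᵥ y₀) = 0 → a = 0 ∧ b = 0 := by
    intro a b h
    have d1 := congrArg (fun w => y₀ ⬝ᵥ (Matrix.J (Fin 2) F *ᵥ w)) h
    have d2 := congrArg (fun w => x₀ ⬝ᵥ (Matrix.J (Fin 2) F *ᵥ w)) h
    simp only [Matrix.mulVec_add, Matrix.mulVec_smul, dotProduct_add,
      dotProduct_smul, smul_eq_mul, Matrix.mulVec_zero, dotProduct_zero,
      Matrix.mulVec_mulVec, ← hJN] at d1 d2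
    rw [hquad y₀, mul_zero, add_zero] at d1
    have hxy : x₀ ⬝ᵥ (JN *ᵥ y₀) = y₀ ⬝ᵥ (JN *ᵥ x₀) := hsymm x₀ y₀
    rw [hxy] at d2
    have ha : a = 0 := by
      rcases mul_eq_zero.mp d1 with h | h
      · exact h
      · exact absurd h hμ
    have hb : b = 0 := by
      rw [hquad x₀, mul_zero, zero_add] at d2
      rcases mul_eq_zero.mp d2 with h | h
      · exact h
      · exact absurd h hμ
    exact ⟨ha, hb⟩
  have hli : LinearIndependent F ![x₀, y₀, N *ᵥ x₀, N *ᵥ y₀] := by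
    rw [Fintype.linearIndependent_iff]
    intro g hg
    rw [Fin.sum_univ_four] at hg
    simp only [Matrix.cons_val_zero, Matrix.cons_val_one, Matrix.head_cons,
      Matrix.cons_val_two, Matrix.tail_cons, Matrix.cons_val_three] at hg
    have h1 := congrArg (fun w => N *ᵥ w) hg
    simp only [Matrix.mulVec_add, Matrix.mulVec_smul, Matrix.mulVec_zero,
      Matrix.mulVec_mulVec, hN.sq, Matrix.zero_mulVec, smul_zero, add_zero] at h1
    obtain ⟨h0, h1'⟩ := key _ _ h1
    rw [h0, h1', zero_smul, zero_smul, zero_add, zero_add] at hg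
    obtain ⟨h2, h3⟩ := key _ _ hg
    intro i
    fin_cases i <;> assumption
  refine ⟨hli, hli.span_eq_top_of_card_eq_finrank ?_⟩
  rw [finrank_V]; simp


lemma exists_mulVec_ne {N : Mat F} (hNne : N ≠ 0) : ∃ x, N *ᵥ x ≠ 0 := by
  by_contra h
  push_neg at h
  apply hNne
  ext i j
  have := congrFun (h (Pi.single j 1)) i
  simpa [Matrix.mulVec_single] using this

lemma colinear [CharP F 2] {N P : Mat F} (hN : IsGood N) (hP : IsGood P)
    (comm : N * P = P * N) (hq : Quad0 (Matrix.J (Fin 2) F * (N * P))) :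
    ∃ d : F, d ≠ 0 ∧ P = d • N := by
  set J2 := Matrix.J (Fin 2) F with hJ2
  have hNP : N * P = 0 := NP_zero hN hP comm hq
  have hPN : P * N = 0 := by rw [← comm]; exact hNP
  have hNne : N ≠ 0 := by
    intro h
    have := hN.rk
    rw [h, Matrix.rank_zero] at this
    exact absurd this (by norm_num)
  obtain ⟨x₀, hx₀⟩ := exists_mulVec_ne hNne
  have hJx : (J2 * N) *ᵥ x₀ ≠ 0 := by
    intro h
    apply hx₀
    have : (J2 * (J2 * N)) *ᵥ x₀ = 0 := by
      rw [← Matrix.mulVec_mulVec, h, Matrix.mulVec_zero]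
    rwa [← Matrix.mul_assoc, hJ2, J_sq, Matrix.one_mul] at this
  obtain ⟨k, hk⟩ : ∃ k, ((J2 * N) *ᵥ x₀) k ≠ 0 := by
    by_contra h
    push_neg at h
    exact hJx (funext h)
  set y₀ : (Fin 2 ⊕ Fin 2) → F := Pi.single k 1 with hy₀
  have hμ : y₀ ⬝ᵥ ((J2 * N) *ᵥ x₀) ≠ 0 := by
    rw [hy₀, single_dotProduct, one_mul]
    exact hk
  obtain ⟨hli, hsp⟩ := span4 hN hμ
  set μ := y₀ ⬝ᵥ ((J2 * N) *ᵥ x₀) with hμdef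
  set d : F := (y₀ ⬝ᵥ ((J2 * P) *ᵥ x₀)) / μ with hd
  set R : Mat F := P - d • N with hR
  have hRN : R * N = 0 := by
    rw [hR, Matrix.sub_mul, hPN, Matrix.smul_mul, hN.sq, smul_zero, sub_zero]
  have hNR : N * R = 0 := by
    rw [hR, Matrix.mul_sub, hNP, Matrix.mul_smul, hN.sq, smul_zero, sub_zero]
  have hJRdecomp : J2 * R = J2 * P - d • (J2 * N) := by
    rw [hR, Matrix.mul_sub, Matrix.mul_smul]
  have hJR_symm : (J2 * R)ᵀ = J2 * R := by
    rw [hJRdecomp, Matrix.transpose_sub, Matrix.transpose_smul, hP.symmJ, hN.symmJ]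
  have hquadR : ∀ z, z ⬝ᵥ ((J2 * R) *ᵥ z) = 0 := by
    intro z
    rw [hJRdecomp, Matrix.sub_mulVec, dotProduct_sub, Matrix.smul_mulVec,
      dotProduct_smul, hP.quad z, hN.quad z, smul_zero, sub_zero]
  -- the two `N`-orthogonality facts
  have hNJ_R : ∀ z w, (N *ᵥ z) ⬝ᵥ ((J2 * R) *ᵥ w) = 0 := by
    intro z w
    rw [dot_shift, Matrix.mulVec_mulVec, ← Matrix.mul_assoc, hN.tJ, Matrix.mul_assoc,
      hNR, Matrix.mul_zero, Matrix.zero_mulVec, dotProduct_zero]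
  have hv2 : ∀ z, R *ᵥ (N *ᵥ z) = 0 := by
    intro z
    rw [Matrix.mulVec_mulVec, hRN, Matrix.zero_mulVec]
  -- R *ᵥ x₀ = 0
  have hmain : ∀ w : (Fin 2 ⊕ Fin 2) → F,
      (∀ i, ![x₀, y₀, N *ᵥ x₀, N *ᵥ y₀] i ⬝ᵥ ((J2 * R) *ᵥ w) = 0) → R *ᵥ w = 0 := by
    intro w hw
    have h0 : (J2 * R) *ᵥ w = 0 := vec_zero_of_dot hsp hw
    have : (J2 * (J2 * R)) *ᵥ w = 0 := by
      rw [← Matrix.mulVec_mulVec, h0, Matrix.mulVec_zero]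
    rwa [← Matrix.mul_assoc, hJ2, J_sq, Matrix.one_mul] at this
  have hRx : R *ᵥ x₀ = 0 := by
    apply hmain
    intro i
    fin_cases i
    · simpa using hquadR x₀
    · show y₀ ⬝ᵥ ((J2 * R) *ᵥ x₀) = 0
      rw [hJRdecomp, Matrix.sub_mulVec, dotProduct_sub, Matrix.smul_mulVec,
        dotProduct_smul, smul_eq_mul, hd]
      rw [div_mul_cancel₀ _ hμ]
      exact sub_self _
    · simpa using hNJ_R x₀ x₀
    · simpa using hNJ_R y₀ x₀
  have hRy : R *ᵥ y₀ = 0 := by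
    apply hmain
    intro i
    fin_cases i
    · show x₀ ⬝ᵥ ((J2 * R) *ᵥ y₀) = 0
      rw [dot_symm hJR_symm, ← Matrix.mulVec_mulVec, hRx, Matrix.mulVec_zero,
        dotProduct_zero]
    · simpa using hquadR y₀
    · simpa using hNJ_R x₀ y₀
    · simpa using hNJ_R y₀ y₀
  have hR0 : R = 0 := by
    apply mat_eq_of_mulVec hsp
    intro i
    fin_cases i
    · simpa using hRx
    · simpa using hRy
    · simpa using hv2 x₀
    · simpa using hv2 y₀
  have hPd : P = d • N := by
    have := sub_eq_zero.mp hR0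
    exact this
  refine ⟨d, ?_, hPd⟩
  intro hd0
  rw [hd0, zero_smul] at hPd
  have := hP.rk
  rw [hPd, Matrix.rank_zero] at this
  exact absurd this (by norm_num)


/-- `t` is a short root involution (as an element of the symplectic group). -/
def SRI (t : Matrix.symplecticGroup (Fin 2) F) : Prop :=
  t * t = 1 ∧ ((t : Mat F) - 1).rank = 2 ∧ Quad0 (Matrix.J (Fin 2) F * (t : Mat F))

lemma mat_add_self [CharP F 2] (A : Mat F) : A + A = 0 := by
  ext i j
  exact CharTwo.add_self_eq_zero _

lemma SRI.good [CharP F 2] {t : Matrix.symplecticGroup (Fin 2) F} (h : SRI t) :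
    IsGood ((t : Mat F) - 1) := by
  set T : Mat F := (t : Mat F) with hT
  have hTT : T * T = 1 := by
    have := congrArg (fun x : Matrix.symplecticGroup (Fin 2) F => (x : Mat F)) h.1
    simpa [hT] using this
  constructor
  · have e : (T - 1) * (T - 1) = T * T + 1 - (T + T) := by noncomm_ring
    rw [e, hTT, mat_add_self (1 : Mat F), mat_add_self T, sub_zero]
  · exact h.2.1
  · intro z
    have e : Matrix.J (Fin 2) F * (T - 1) = Matrix.J (Fin 2) F * T - Matrix.J (Fin 2) F := by
      rw [Matrix.mul_sub, Matrix.mul_one]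
    rw [e, Matrix.sub_mulVec, dotProduct_sub, h.2.2 z, J_quad z, sub_zero]

lemma SRI.conj [CharP F 2] {t : Matrix.symplecticGroup (Fin 2) F} (h : SRI t)
    (g : Matrix.symplecticGroup (Fin 2) F) : SRI (g * t * g⁻¹) := by
  set U : Mat F := (g : Mat F) with hU
  set U' : Mat F := ((g⁻¹ : Matrix.symplecticGroup (Fin 2) F) : Mat F) with hU'
  have hUU' : U * U' = 1 := by
    calc U * U' = ((g * g⁻¹ : Matrix.symplecticGroup (Fin 2) F) : Mat F) := rfl
    _ = ((1 : Matrix.symplecticGroup (Fin 2) F) : Mat F) := by rw [mul_inv_cancel]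
    _ = 1 := rfl
  have hU'U : U' * U = 1 := by
    calc U' * U = ((g⁻¹ * g : Matrix.symplecticGroup (Fin 2) F) : Mat F) := rfl
    _ = ((1 : Matrix.symplecticGroup (Fin 2) F) : Mat F) := by rw [inv_mul_cancel]
    _ = 1 := rfl
  have hcoe : ((g * t * g⁻¹ : Matrix.symplecticGroup (Fin 2) F) : Mat F)
      = U * (t : Mat F) * U' := rfl
  refine ⟨?_, ?_, ?_⟩
  · have h1 := h.1
    have e : g * t * g⁻¹ * (g * t * g⁻¹) = g * (t * t) * g⁻¹ := by group
    rw [e, h1]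
    group
  · rw [hcoe]
    have e : U * (t : Mat F) * U' - 1 = U * ((t : Mat F) - 1) * U' := by
      rw [Matrix.mul_sub, Matrix.sub_mul, Matrix.mul_one, hUU']
    rw [e]
    have hdU : IsUnit U.det := SymplecticGroup.symplectic_det g.2
    have hdU' : IsUnit U'.det := SymplecticGroup.symplectic_det (g⁻¹).2
    rw [Matrix.mul_assoc, Matrix.rank_mul_eq_right_of_isUnit_det U _ hdU,
      Matrix.rank_mul_eq_left_of_isUnit_det U' _ hdU']
    exact h.2.1
  · rw [hcoe]
    have hsymp : Uᵀ * Matrix.J (Fin 2) F * U = Matrix.J (Fin 2) F :=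
      (SymplecticGroup.mem_iff').mp g.2
    have hJU : Matrix.J (Fin 2) F * U = U'ᵀ * Matrix.J (Fin 2) F := by
      have h1 : U'ᵀ * (Uᵀ * Matrix.J (Fin 2) F * U) = U'ᵀ * Matrix.J (Fin 2) F := by
        rw [hsymp]
      have h2 : U'ᵀ * Uᵀ = 1 := by
        rw [← Matrix.transpose_mul, hUU', Matrix.transpose_one]
      rw [← Matrix.mul_assoc, ← Matrix.mul_assoc, h2, Matrix.one_mul] at h1
      exact h1
    have e : Matrix.J (Fin 2) F * (U * (t : Mat F) * U')
        = U'ᵀ * (Matrix.J (Fin 2) F * (t : Mat F)) * U' := by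
      rw [← Matrix.mul_assoc, ← Matrix.mul_assoc, hJU, Matrix.mul_assoc U'ᵀ _ _,
        ← Matrix.mul_assoc]
    intro z
    rw [e]
    have : (U'ᵀ * (Matrix.J (Fin 2) F * (t : Mat F)) * U') *ᵥ z
        = U'ᵀ *ᵥ ((Matrix.J (Fin 2) F * (t : Mat F)) *ᵥ (U' *ᵥ z)) := by
      rw [Matrix.mulVec_mulVec, Matrix.mulVec_mulVec]
    rw [this, ← dot_shift]
    exact h.2.2 (U' *ᵥ z)

lemma SRI.of_isConj [CharP F 2] {t h : Matrix.symplecticGroup (Fin 2) F} (ht : SRI t)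
    (hc : IsConj t h) : SRI h := by
  obtain ⟨g, hg⟩ := isConj_iff.mp hc
  rw [← hg]
  exact ht.conj g

lemma exists_sqrt [CharP F 2] [Fintype F] (c : F) : ∃ x : F, x * x = c := by
  have hinj : Function.Injective (fun x : F => x * x) := by
    intro a b hab
    have h1 : (a + b) * (a + b) = 0 := by
      rw [CharTwo.add_mul_self]
      simp only at hab
      rw [hab, CharTwo.add_self_eq_zero]
    have h2 : a + b = 0 := by
      exact mul_self_eq_zero.mp h1
    have h3 : a = -b := eq_neg_of_add_eq_zero_left h2
    rwa [CharTwo.neg_eq] at h3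
  exact Finite.injective_iff_surjective.mp hinj c


lemma conj_class [CharP F 2] [Fintype F] {t : Matrix.symplecticGroup (Fin 2) F}
    (ht : SRI t) {c : F} (hc : c ≠ 0) :
    ∃ g : Matrix.symplecticGroup (Fin 2) F,
      ((g * t * g⁻¹ : Matrix.symplecticGroup (Fin 2) F) : Mat F)
        = 1 + c • ((t : Mat F) - 1) := by
  classical
  set J2 := Matrix.J (Fin 2) F with hJ2
  set N : Mat F := (t : Mat F) - 1 with hNdef
  have hN : IsGood N := ht.good
  obtain ⟨l, hl⟩ := exists_sqrt (F := F) c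
  have hl0 : l ≠ 0 := by
    intro h
    rw [h, mul_zero] at hl
    exact hc hl.symm
  -- choose x₀, y₀
  have hNne : N ≠ 0 := by
    intro h
    have := hN.rk
    rw [h, Matrix.rank_zero] at this
    exact absurd this (by norm_num)
  obtain ⟨x₀, hx₀⟩ := exists_mulVec_ne hNne
  have hJx : (J2 * N) *ᵥ x₀ ≠ 0 := by
    intro h
    apply hx₀
    have : (J2 * (J2 * N)) *ᵥ x₀ = 0 := by
      rw [← Matrix.mulVec_mulVec, h, Matrix.mulVec_zero]
    rwa [← Matrix.mul_assoc, hJ2, J_sq, Matrix.one_mul] at this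
  obtain ⟨k, hk⟩ : ∃ k, ((J2 * N) *ᵥ x₀) k ≠ 0 := by
    by_contra h
    push_neg at h
    exact hJx (funext h)
  set y' : (Fin 2 ⊕ Fin 2) → F := Pi.single k 1 with hy'
  set yr : (Fin 2 ⊕ Fin 2) → F := (((J2 * N) *ᵥ x₀) k)⁻¹ • y' with hyr
  have hyr1 : yr ⬝ᵥ ((J2 * N) *ᵥ x₀) = 1 := by
    rw [hyr, smul_dotProduct, hy', single_dotProduct, one_mul, smul_eq_mul,
      inv_mul_cancel₀ hk]
  -- orthogonality helpers
  have hNN : ∀ z w, (N *ᵥ z) ⬝ᵥ (J2 *ᵥ (N *ᵥ w)) = 0 := by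
    intro z w
    rw [dot_shift, Matrix.mulVec_mulVec, Matrix.mulVec_mulVec, hN.tJ,
      Matrix.mul_assoc, hN.sq, Matrix.mul_zero, Matrix.zero_mulVec, dotProduct_zero]
  have hJNsym : ∀ z w, z ⬝ᵥ ((J2 * N) *ᵥ w) = w ⬝ᵥ ((J2 * N) *ᵥ z) := dot_symm hN.symmJ
  -- adjust y
  set p : F := x₀ ⬝ᵥ (J2 *ᵥ yr) with hp
  set y₁ : (Fin 2 ⊕ Fin 2) → F := yr + p • (N *ᵥ yr) with hy₁
  have h1 : y₁ ⬝ᵥ ((J2 * N) *ᵥ x₀) = 1 := by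
    rw [hy₁, add_dotProduct, hyr1, smul_dotProduct, smul_eq_mul]
    have : (N *ᵥ yr) ⬝ᵥ ((J2 * N) *ᵥ x₀) = 0 := by
      have := hNN yr x₀
      rwa [Matrix.mulVec_mulVec] at this
    rw [this, mul_zero, add_zero]
  have h2 : x₀ ⬝ᵥ (J2 *ᵥ y₁) = 0 := by
    rw [hy₁, Matrix.mulVec_add, dotProduct_add, ← hp, Matrix.mulVec_smul,
      dotProduct_smul, smul_eq_mul]
    have e1 : x₀ ⬝ᵥ (J2 *ᵥ (N *ᵥ yr)) = 1 := by
      rw [Matrix.mulVec_mulVec, hJNsym x₀ yr, hyr1]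
    rw [e1, mul_one, CharTwo.add_self_eq_zero]
  have hμ1 : y₁ ⬝ᵥ ((J2 * N) *ᵥ x₀) ≠ 0 := by rw [h1]; exact one_ne_zero
  obtain ⟨hli, hsp⟩ := span4 hN hμ1
  set v : Fin 4 → (Fin 2 ⊕ Fin 2) → F := ![x₀, y₁, N *ᵥ x₀, N *ᵥ y₁] with hv
  -- gram facts
  have g00 : v 0 ⬝ᵥ (J2 *ᵥ v 0) = 0 := J_quad x₀
  have g11 : v 1 ⬝ᵥ (J2 *ᵥ v 1) = 0 := J_quad y₁
  have g01 : v 0 ⬝ᵥ (J2 *ᵥ v 1) = 0 := h2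
  have g10 : v 1 ⬝ᵥ (J2 *ᵥ v 0) = 0 := by
    show y₁ ⬝ᵥ (J2 *ᵥ x₀) = 0
    rw [dot_symm J_symm]
    exact h2
  have g02 : v 0 ⬝ᵥ (J2 *ᵥ v 2) = 0 := by
    show x₀ ⬝ᵥ (J2 *ᵥ (N *ᵥ x₀)) = 0
    rw [Matrix.mulVec_mulVec]
    exact hN.quad x₀
  have g20 : v 2 ⬝ᵥ (J2 *ᵥ v 0) = 0 := by
    show (N *ᵥ x₀) ⬝ᵥ (J2 *ᵥ x₀) = 0
    rw [dot_symm J_symm, Matrix.mulVec_mulVec]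
    exact hN.quad x₀
  have g13 : v 1 ⬝ᵥ (J2 *ᵥ v 3) = 0 := by
    show y₁ ⬝ᵥ (J2 *ᵥ (N *ᵥ y₁)) = 0
    rw [Matrix.mulVec_mulVec]
    exact hN.quad y₁
  have g31 : v 3 ⬝ᵥ (J2 *ᵥ v 1) = 0 := by
    show (N *ᵥ y₁) ⬝ᵥ (J2 *ᵥ y₁) = 0
    rw [dot_symm J_symm, Matrix.mulVec_mulVec]
    exact hN.quad y₁
  have g03 : v 0 ⬝ᵥ (J2 *ᵥ v 3) = 1 := by
    show x₀ ⬝ᵥ (J2 *ᵥ (N *ᵥ y₁)) = 1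
    rw [Matrix.mulVec_mulVec, hJNsym x₀ y₁]
    exact h1
  have g30 : v 3 ⬝ᵥ (J2 *ᵥ v 0) = 1 := by
    show (N *ᵥ y₁) ⬝ᵥ (J2 *ᵥ x₀) = 1
    rw [dot_symm J_symm, Matrix.mulVec_mulVec, hJNsym x₀ y₁]
    exact h1
  have g12 : v 1 ⬝ᵥ (J2 *ᵥ v 2) = 1 := by
    show y₁ ⬝ᵥ (J2 *ᵥ (N *ᵥ x₀)) = 1
    rw [Matrix.mulVec_mulVec]
    exact h1
  have g21 : v 2 ⬝ᵥ (J2 *ᵥ v 1) = 1 := by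
    show (N *ᵥ x₀) ⬝ᵥ (J2 *ᵥ y₁) = 1
    rw [dot_symm J_symm, Matrix.mulVec_mulVec]
    exact h1
  have g22 : v 2 ⬝ᵥ (J2 *ᵥ v 2) = 0 := hNN x₀ x₀
  have g23 : v 2 ⬝ᵥ (J2 *ᵥ v 3) = 0 := hNN x₀ y₁
  have g32 : v 3 ⬝ᵥ (J2 *ᵥ v 2) = 0 := hNN y₁ x₀
  have g33 : v 3 ⬝ᵥ (J2 *ᵥ v 3) = 0 := hNN y₁ y₁
  -- the matrix G
  set b := basisOfLinearIndependentOfCardEqFinrank hli (by rw [finrank_V]; simp) with hb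
  have hbv : ∀ i, b i = v i := by
    intro i
    rw [hb, coe_basisOfLinearIndependentOfCardEqFinrank]
  set sc : Fin 4 → F := ![l⁻¹, l⁻¹, l, l] with hsc
  set gl := b.constr F (fun i => sc i • v i) with hgl
  set G : Mat F := LinearMap.toMatrix' gl with hG
  have hGv : ∀ x, G *ᵥ x = gl x := by
    intro x
    rw [hG, ← Matrix.toLin'_apply, Matrix.toLin'_toMatrix']
  have hGi : ∀ i, G *ᵥ v i = sc i • v i := by
    intro i
    rw [hGv, ← hbv i, hgl, Module.Basis.constr_basis, hbv i]
  -- G is symplectic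
  have hGsp : G ∈ Matrix.symplecticGroup (Fin 2) F := by
    rw [SymplecticGroup.mem_iff']
    apply mat_eq_of_dot hsp
    intro i j
    have lhs_eq : v i ⬝ᵥ ((Gᵀ * J2 * G) *ᵥ v j)
        = (sc i * sc j) * (v i ⬝ᵥ (J2 *ᵥ v j)) := by
      have e1 : (Gᵀ * J2 * G) *ᵥ v j = Gᵀ *ᵥ (J2 *ᵥ (G *ᵥ v j)) := by
        rw [Matrix.mulVec_mulVec, Matrix.mulVec_mulVec]
      rw [e1, ← dot_shift, hGi j, hGi i, Matrix.mulVec_smul, dotProduct_smul,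
        smul_dotProduct, smul_eq_mul, smul_eq_mul]
      ring
    rw [lhs_eq]
    have e03 : sc 0 * sc 3 = 1 := by show l⁻¹ * l = 1; exact inv_mul_cancel₀ hl0
    have e12 : sc 1 * sc 2 = 1 := by show l⁻¹ * l = 1; exact inv_mul_cancel₀ hl0
    have e21 : sc 2 * sc 1 = 1 := by show l * l⁻¹ = 1; exact mul_inv_cancel₀ hl0
    have e30 : sc 3 * sc 0 = 1 := by show l * l⁻¹ = 1; exact mul_inv_cancel₀ hl0
    fin_cases i <;> fin_cases j
    · show sc 0 * sc 0 * (v 0 ⬝ᵥ (J2 *ᵥ v 0)) = v 0 ⬝ᵥ (J2 *ᵥ v 0); rw [g00]; ring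
    · show sc 0 * sc 1 * (v 0 ⬝ᵥ (J2 *ᵥ v 1)) = v 0 ⬝ᵥ (J2 *ᵥ v 1); rw [g01]; ring
    · show sc 0 * sc 2 * (v 0 ⬝ᵥ (J2 *ᵥ v 2)) = v 0 ⬝ᵥ (J2 *ᵥ v 2); rw [g02]; ring
    · show sc 0 * sc 3 * (v 0 ⬝ᵥ (J2 *ᵥ v 3)) = v 0 ⬝ᵥ (J2 *ᵥ v 3); rw [g03, e03]; ring
    · show sc 1 * sc 0 * (v 1 ⬝ᵥ (J2 *ᵥ v 0)) = v 1 ⬝ᵥ (J2 *ᵥ v 0); rw [g10]; ring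
    · show sc 1 * sc 1 * (v 1 ⬝ᵥ (J2 *ᵥ v 1)) = v 1 ⬝ᵥ (J2 *ᵥ v 1); rw [g11]; ring
    · show sc 1 * sc 2 * (v 1 ⬝ᵥ (J2 *ᵥ v 2)) = v 1 ⬝ᵥ (J2 *ᵥ v 2); rw [g12, e12]; ring
    · show sc 1 * sc 3 * (v 1 ⬝ᵥ (J2 *ᵥ v 3)) = v 1 ⬝ᵥ (J2 *ᵥ v 3); rw [g13]; ring
    · show sc 2 * sc 0 * (v 2 ⬝ᵥ (J2 *ᵥ v 0)) = v 2 ⬝ᵥ (J2 *ᵥ v 0); rw [g20]; ring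
    · show sc 2 * sc 1 * (v 2 ⬝ᵥ (J2 *ᵥ v 1)) = v 2 ⬝ᵥ (J2 *ᵥ v 1); rw [g21, e21]; ring
    · show sc 2 * sc 2 * (v 2 ⬝ᵥ (J2 *ᵥ v 2)) = v 2 ⬝ᵥ (J2 *ᵥ v 2); rw [g22]; ring
    · show sc 2 * sc 3 * (v 2 ⬝ᵥ (J2 *ᵥ v 3)) = v 2 ⬝ᵥ (J2 *ᵥ v 3); rw [g23]; ring
    · show sc 3 * sc 0 * (v 3 ⬝ᵥ (J2 *ᵥ v 0)) = v 3 ⬝ᵥ (J2 *ᵥ v 0); rw [g30, e30]; ring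
    · show sc 3 * sc 1 * (v 3 ⬝ᵥ (J2 *ᵥ v 1)) = v 3 ⬝ᵥ (J2 *ᵥ v 1); rw [g31]; ring
    · show sc 3 * sc 2 * (v 3 ⬝ᵥ (J2 *ᵥ v 2)) = v 3 ⬝ᵥ (J2 *ᵥ v 2); rw [g32]; ring
    · show sc 3 * sc 3 * (v 3 ⬝ᵥ (J2 *ᵥ v 3)) = v 3 ⬝ᵥ (J2 *ᵥ v 3); rw [g33]; ring
  -- commutation relation
  have hGx : G *ᵥ x₀ = l⁻¹ • x₀ := hGi 0
  have hGy : G *ᵥ y₁ = l⁻¹ • y₁ := hGi 1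
  have hGNx : G *ᵥ (N *ᵥ x₀) = l • (N *ᵥ x₀) := hGi 2
  have hGNy : G *ᵥ (N *ᵥ y₁) = l • (N *ᵥ y₁) := hGi 3
  have ht_eq : (t : Mat F) = 1 + N := by rw [hNdef]; abel
  have hlc : c * l⁻¹ = l := by
    rw [← hl]
    field_simp
  have hcommG : G * (t : Mat F) = (1 + c • N) * G := by
    apply mat_eq_of_mulVec hsp
    intro i
    fin_cases i
    · show (G * (t : Mat F)) *ᵥ x₀ = ((1 + c • N) * G) *ᵥ x₀
      have eL : (G * (t : Mat F)) *ᵥ x₀ = l⁻¹ • x₀ + l • (N *ᵥ x₀) := by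
        rw [← Matrix.mulVec_mulVec, ht_eq, Matrix.add_mulVec, Matrix.one_mulVec,
          Matrix.mulVec_add, hGx, hGNx]
      have eR : ((1 + c • N) * G) *ᵥ x₀ = l⁻¹ • x₀ + l • (N *ᵥ x₀) := by
        rw [← Matrix.mulVec_mulVec, hGx, Matrix.add_mulVec, Matrix.one_mulVec,
          Matrix.smul_mulVec, Matrix.mulVec_smul, smul_smul, hlc]
      rw [eL, eR]
    · show (G * (t : Mat F)) *ᵥ y₁ = ((1 + c • N) * G) *ᵥ y₁
      have eL : (G * (t : Mat F)) *ᵥ y₁ = l⁻¹ • y₁ + l • (N *ᵥ y₁) := by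
        rw [← Matrix.mulVec_mulVec, ht_eq, Matrix.add_mulVec, Matrix.one_mulVec,
          Matrix.mulVec_add, hGy, hGNy]
      have eR : ((1 + c • N) * G) *ᵥ y₁ = l⁻¹ • y₁ + l • (N *ᵥ y₁) := by
        rw [← Matrix.mulVec_mulVec, hGy, Matrix.add_mulVec, Matrix.one_mulVec,
          Matrix.smul_mulVec, Matrix.mulVec_smul, smul_smul, hlc]
      rw [eL, eR]
    · show (G * (t : Mat F)) *ᵥ (N *ᵥ x₀) = ((1 + c • N) * G) *ᵥ (N *ᵥ x₀)
      have eL : (G * (t : Mat F)) *ᵥ (N *ᵥ x₀) = l • (N *ᵥ x₀) := by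
        rw [← Matrix.mulVec_mulVec, ht_eq, Matrix.add_mulVec, Matrix.one_mulVec,
          Matrix.mulVec_mulVec x₀ N N, hN.sq, Matrix.zero_mulVec, add_zero, hGNx]
      have eR : ((1 + c • N) * G) *ᵥ (N *ᵥ x₀) = l • (N *ᵥ x₀) := by
        rw [← Matrix.mulVec_mulVec, hGNx, Matrix.add_mulVec, Matrix.one_mulVec,
          Matrix.smul_mulVec, Matrix.mulVec_smul, Matrix.mulVec_mulVec x₀ N N, hN.sq,
          Matrix.zero_mulVec, smul_zero, smul_zero, add_zero]
      rw [eL, eR]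
    · show (G * (t : Mat F)) *ᵥ (N *ᵥ y₁) = ((1 + c • N) * G) *ᵥ (N *ᵥ y₁)
      have eL : (G * (t : Mat F)) *ᵥ (N *ᵥ y₁) = l • (N *ᵥ y₁) := by
        rw [← Matrix.mulVec_mulVec, ht_eq, Matrix.add_mulVec, Matrix.one_mulVec,
          Matrix.mulVec_mulVec y₁ N N, hN.sq, Matrix.zero_mulVec, add_zero, hGNy]
      have eR : ((1 + c • N) * G) *ᵥ (N *ᵥ y₁) = l • (N *ᵥ y₁) := by
        rw [← Matrix.mulVec_mulVec, hGNy, Matrix.add_mulVec, Matrix.one_mulVec,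
          Matrix.smul_mulVec, Matrix.mulVec_smul, Matrix.mulVec_mulVec y₁ N N, hN.sq,
          Matrix.zero_mulVec, smul_zero, smul_zero, add_zero]
      rw [eL, eR]
  -- conclude
  refine ⟨⟨G, hGsp⟩, ?_⟩
  set g : Matrix.symplecticGroup (Fin 2) F := ⟨G, hGsp⟩ with hgdef
  have hinv : G * ((g⁻¹ : Matrix.symplecticGroup (Fin 2) F) : Mat F) = 1 := by
    calc G * ((g⁻¹ : Matrix.symplecticGroup (Fin 2) F) : Mat F)
        = ((g * g⁻¹ : Matrix.symplecticGroup (Fin 2) F) : Mat F) := rfl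
    _ = ((1 : Matrix.symplecticGroup (Fin 2) F) : Mat F) := by rw [mul_inv_cancel]
    _ = 1 := rfl
  have hgcoe : ((g * t * g⁻¹ : Matrix.symplecticGroup (Fin 2) F) : Mat F)
      = G * (t : Mat F) * ((g⁻¹ : Matrix.symplecticGroup (Fin 2) F) : Mat F) := rfl
  rw [hgcoe, hcommG, Matrix.mul_assoc, hinv, Matrix.mul_one]


lemma mul_one_add_smul {N : Mat F} (hNsq : N * N = 0) (c d : F) :
    ((1 : Mat F) + c • N) * (1 + d • N) = 1 + (c + d) • N := by
  rw [Matrix.add_mul, Matrix.one_mul, Matrix.smul_mul, Matrix.mul_add, Matrix.mul_one,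
    Matrix.mul_smul, hNsq, smul_zero, add_zero, add_smul]
  abel

lemma neighbor_step [CharP F 2] {t a b : Matrix.symplecticGroup (Fin 2) F} (ht : SRI t)
    (hadj : (classGraph {x | IsConj t x}).Adj a b)
    (ha : ∃ c : F, c ≠ 0 ∧ (a : Mat F) = 1 + c • ((t : Mat F) - 1)) :
    ∃ d : F, d ≠ 0 ∧ (b : Mat F) = 1 + d • ((t : Mat F) - 1) := by
  obtain ⟨hne, haD, hbD, hcomm, hprod⟩ := hadj
  obtain ⟨c, hc0, hca⟩ := ha
  set J2 := Matrix.J (Fin 2) F with hJ2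
  set N : Mat F := (t : Mat F) - 1 with hNdef
  have hN : IsGood N := ht.good
  have hSb : SRI b := ht.of_isConj hbD
  set P : Mat F := (b : Mat F) - 1 with hPdef
  have hP : IsGood P := hSb.good
  have hbP : (b : Mat F) = 1 + P := by rw [hPdef]; abel
  -- commutation of the matrices
  have hm : (a : Mat F) * (b : Mat F) = (b : Mat F) * (a : Mat F) := by
    calc (a : Mat F) * (b : Mat F) = ((a * b : Matrix.symplecticGroup (Fin 2) F) : Mat F) := rfl
    _ = ((b * a : Matrix.symplecticGroup (Fin 2) F) : Mat F) := by rw [hcomm.eq]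
    _ = (b : Mat F) * (a : Mat F) := rfl
  have expand1 : ((1 : Mat F) + c • N) * (1 + P) = 1 + P + c • N + c • (N * P) := by
    rw [Matrix.add_mul, Matrix.one_mul, Matrix.smul_mul, Matrix.mul_add, Matrix.mul_one,
      smul_add]
    abel
  have expand2 : ((1 : Mat F) + P) * (1 + c • N) = 1 + P + c • N + c • (P * N) := by
    rw [Matrix.mul_add, Matrix.mul_one, Matrix.mul_smul, Matrix.add_mul, Matrix.one_mul,
      smul_add]
    abel
  have hm' : (1 : Mat F) + P + c • N + c • (N * P) = 1 + P + c • N + c • (P * N) := by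
    rw [← expand1, ← expand2, ← hca, ← hbP]
    exact hm
  have hsmul : c • (N * P) = c • (P * N) := add_left_cancel hm'
  have comm : N * P = P * N := by
    have h := hsmul
    rw [← sub_eq_zero, ← smul_sub] at h
    rcases smul_eq_zero.mp h with h | h
    · exact absurd h hc0
    · exact sub_eq_zero.mp h
  -- the product a * b lies in D
  have haa : a * a = 1 := by
    apply Subtype.ext
    calc ((a * a : Matrix.symplecticGroup (Fin 2) F) : Mat F)
        = (a : Mat F) * (a : Mat F) := rfl
    _ = (1 + c • N) * (1 + c • N) := by rw [hca]
    _ = 1 + (c + c) • N := mul_one_add_smul hN.sq c c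
    _ = 1 := by rw [CharTwo.add_self_eq_zero, zero_smul, add_zero]
  have hbb : b * b = 1 := hSb.1
  have hainv : a⁻¹ = a := inv_eq_of_mul_eq_one_right haa
  have hbinv : b⁻¹ = b := inv_eq_of_mul_eq_one_right hbb
  have habD : IsConj t (a * b) := by
    rcases hprod with h | h
    · rwa [hbinv] at h
    · rw [hainv, ← hcomm.eq] at h
      exact h
  have hSab : SRI (a * b) := ht.of_isConj habD
  -- extract the quadratic condition on N * P
  have quadNP : Quad0 (J2 * (N * P)) := by
    intro z
    have hq := hSab.2.2 z
    have hab_coe : ((a * b : Matrix.symplecticGroup (Fin 2) F) : Mat F)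
        = 1 + P + c • N + c • (N * P) := by
      calc ((a * b : Matrix.symplecticGroup (Fin 2) F) : Mat F)
          = (a : Mat F) * (b : Mat F) := rfl
      _ = (1 + c • N) * (1 + P) := by rw [hca, hbP]
      _ = 1 + P + c • N + c • (N * P) := expand1
    rw [hab_coe] at hq
    rw [Matrix.mul_add, Matrix.mul_add, Matrix.mul_add, Matrix.mul_one, Matrix.mul_smul,
      Matrix.mul_smul] at hq
    rw [Matrix.add_mulVec, Matrix.add_mulVec, Matrix.add_mulVec, dotProduct_add,
      dotProduct_add, dotProduct_add, Matrix.smul_mulVec,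
      Matrix.smul_mulVec, dotProduct_smul, dotProduct_smul] at hq
    rw [J_quad z, hP.quad z, hN.quad z, smul_zero] at hq
    simp only [zero_add, add_zero, smul_eq_mul] at hq
    rcases mul_eq_zero.mp hq with h | h
    · exact absurd h hc0
    · exact h
  obtain ⟨d, hd0, hPd⟩ := colinear hN hP comm quadNP
  refine ⟨d, hd0, ?_⟩
  rw [hbP, hPd]

lemma walk_closed [CharP F 2] {t : Matrix.symplecticGroup (Fin 2) F} (ht : SRI t) :
    ∀ {a b : Matrix.symplecticGroup (Fin 2) F}
      (_ : (classGraph {x | IsConj t x}).Walk a b),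
      (∃ c : F, c ≠ 0 ∧ (a : Mat F) = 1 + c • ((t : Mat F) - 1)) →
      (∃ c : F, c ≠ 0 ∧ (b : Mat F) = 1 + c • ((t : Mat F) - 1)) := by
  intro a b w
  induction w with
  | nil => exact id
  | cons h p ih => exact fun haa => ih (neighbor_step ht h haa)

end Sp4Aux


theorem stmt7 (F : Type*) [Field F] [Fintype F] (a : ℕ) (ha : 2 ≤ a)
    (hF : Fintype.card F = 2 ^ a)
    (t : Sp 2 F) (hinv : t * t = 1)
    (ht : ((t : Matrix (Fin 2 ⊕ Fin 2) (Fin 2 ⊕ Fin 2) F) - 1).rank = 2)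
    (hshort : ∀ x : (Fin 2 ⊕ Fin 2) → F,
      dotProduct x
        (Matrix.mulVec (Matrix.J (Fin 2) F) (Matrix.mulVec (t : Matrix (Fin 2 ⊕ Fin 2) (Fin 2 ⊕ Fin 2) F) x)) = 0) :
    (DeltaC t : Set (Sp 2 F))
      = {u : Sp 2 F | ∃ c : F,
          (u : Matrix (Fin 2 ⊕ Fin 2) (Fin 2 ⊕ Fin 2) F)
            = 1 + c • ((t : Matrix (Fin 2 ⊕ Fin 2) (Fin 2 ⊕ Fin 2) F) - 1)} := by
  classical
  -- the characteristic of `F` is 2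
  haveI hchar2 : CharP F 2 := by
    haveI := ringChar.charP F
    obtain ⟨n, hp, hcard⟩ := FiniteField.card F (ringChar F)
    have h2 : ringChar F = 2 := by
      have hdvd : ringChar F ∣ 2 ^ a := by
        rw [← hF, hcard]
        exact dvd_pow_self (ringChar F) n.pos.ne'
      exact (Nat.prime_dvd_prime_iff_eq hp Nat.prime_two).mp (hp.dvd_of_dvd_pow hdvd)
    rw [← h2]
    exact ringChar.charP F
  have htS : Sp4Aux.SRI t := by
    refine ⟨hinv, ht, ?_⟩
    intro x
    have hx := hshort x
    rwa [Matrix.mulVec_mulVec] at hx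
  set N : Sp4Aux.Mat F := (t : Sp4Aux.Mat F) - 1 with hNdef
  have hN : Sp4Aux.IsGood N := htS.good
  have hNne : N ≠ 0 := by
    intro h
    have := hN.rk
    rw [h, Matrix.rank_zero] at this
    exact absurd this (by norm_num)
  have ht_eq : (t : Sp4Aux.Mat F) = 1 + N := by rw [hNdef]; abel
  -- the subgroup of `1 + c • N`
  let X : Subgroup (Sp 2 F) :=
    { carrier := {u : Sp 2 F | ∃ c : F, (u : Sp4Aux.Mat F) = 1 + c • N}
      one_mem' := ⟨0, by simp⟩
      mul_mem' := by
        rintro u w ⟨c, hc⟩ ⟨d, hd⟩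
        refine ⟨c + d, ?_⟩
        calc ((u * w : Sp 2 F) : Sp4Aux.Mat F) = (u : Sp4Aux.Mat F) * (w : Sp4Aux.Mat F) := rfl
        _ = (1 + c • N) * (1 + d • N) := by rw [hc, hd]
        _ = 1 + (c + d) • N := Sp4Aux.mul_one_add_smul hN.sq c d
      inv_mem' := by
        rintro u ⟨c, hc⟩
        have huu : u * u = 1 := by
          apply Subtype.ext
          calc ((u * u : Sp 2 F) : Sp4Aux.Mat F) = (u : Sp4Aux.Mat F) * (u : Sp4Aux.Mat F) := rfl
          _ = (1 + c • N) * (1 + c • N) := by rw [hc]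
          _ = 1 + (c + c) • N := Sp4Aux.mul_one_add_smul hN.sq c c
          _ = 1 := by rw [CharTwo.add_self_eq_zero, zero_smul, add_zero]
        rw [inv_eq_of_mul_eq_one_right huu]
        exact ⟨c, hc⟩ }
  -- membership of `1 + c • N` in the conjugacy class, for `c ≠ 0`
  have humem : ∀ {u : Sp 2 F} {c : F}, c ≠ 0 → (u : Sp4Aux.Mat F) = 1 + c • N →
      IsConj t u := by
    intro u c hc0 hu
    obtain ⟨g, hg⟩ := Sp4Aux.conj_class htS hc0
    exact isConj_iff.mpr ⟨g, Subtype.ext (by rw [hg, ← hu])⟩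
  have hDeltaEq : DeltaC t = X := by
    apply le_antisymm
    · rw [DeltaC, Delta, Subgroup.closure_le]
      rintro h ⟨hD, hreach⟩
      obtain ⟨w⟩ := hreach
      obtain ⟨d, hd0, hdh⟩ := Sp4Aux.walk_closed htS w ⟨1, one_ne_zero, by rw [one_smul]; abel⟩
      exact ⟨d, hdh⟩
    · rintro u ⟨c, hc⟩
      rcases eq_or_ne c 0 with rfl | hc0
      · have hu1 : u = 1 := Subtype.ext (by rw [hc]; simp)
        rw [hu1]
        exact Subgroup.one_mem _
      · have huD : IsConj t u := humem hc0 hc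
        have huu : u * u = 1 := by
          apply Subtype.ext
          calc ((u * u : Sp 2 F) : Sp4Aux.Mat F) = (u : Sp4Aux.Mat F) * (u : Sp4Aux.Mat F) := rfl
          _ = (1 + c • N) * (1 + c • N) := by rw [hc]
          _ = 1 + (c + c) • N := Sp4Aux.mul_one_add_smul hN.sq c c
          _ = 1 := by rw [CharTwo.add_self_eq_zero, zero_smul, add_zero]
        rw [DeltaC, Delta]
        apply Subgroup.subset_closure
        refine ⟨huD, ?_⟩
        rcases eq_or_ne c 1 with rfl | hc1
        · have : u = t := Subtype.ext (by rw [hc, one_smul, ht_eq])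
          rw [this]
        · apply SimpleGraph.Adj.reachable
          refine ⟨?_, IsConj.refl t, huD, ?_, ?_⟩
          · intro htu
            apply hc1
            have h1 : (1 : Sp4Aux.Mat F) + (1 : F) • N = 1 + c • N := by
              rw [one_smul, ← ht_eq, htu, hc]
            have h2 : (1 : F) • N = c • N := add_left_cancel h1
            have h3 : ((1 : F) - c) • N = 0 := by rw [sub_smul, h2, sub_self]
            rcases smul_eq_zero.mp h3 with h | h
            · exact (sub_eq_zero.mp h).symm
            · exact absurd h hNne
          · show t * u = u * t
            apply Subtype.ext
            calc ((t * u : Sp 2 F) : Sp4Aux.Mat F)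
                = (t : Sp4Aux.Mat F) * (u : Sp4Aux.Mat F) := rfl
            _ = (1 + (1 : F) • N) * (1 + c • N) := by rw [hc, ht_eq, one_smul]
            _ = 1 + ((1 : F) + c) • N := Sp4Aux.mul_one_add_smul hN.sq 1 c
            _ = 1 + (c + (1 : F)) • N := by rw [add_comm (1 : F) c]
            _ = (1 + c • N) * (1 + (1 : F) • N) := (Sp4Aux.mul_one_add_smul hN.sq c 1).symm
            _ = (u : Sp4Aux.Mat F) * (t : Sp4Aux.Mat F) := by rw [hc, ht_eq, one_smul]
          · left
            rw [inv_eq_of_mul_eq_one_right huu]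
            have hc1' : (1 : F) + c ≠ 0 := by
              intro h
              apply hc1
              have hcn : c = -1 := eq_neg_of_add_eq_zero_right h
              rwa [CharTwo.neg_eq] at hcn
            apply humem hc1'
            calc ((t * u : Sp 2 F) : Sp4Aux.Mat F)
                = (t : Sp4Aux.Mat F) * (u : Sp4Aux.Mat F) := rfl
            _ = (1 + (1 : F) • N) * (1 + c • N) := by rw [hc, ht_eq, one_smul]
            _ = 1 + ((1 : F) + c) • N := Sp4Aux.mul_one_add_smul hN.sq 1 c
  rw [hDeltaEq]
  rfl
end

section
/- Let q be a prime power, n ≥ 2, and let s, t ∈ Sp_{2n}(q) be commuting transvections (rank(s − 1) = rank(t − 1) = 1) such that the column spaces of s − 1 and t − 1 are distinct. Let H₂ = {1 + a(s − 1) : a ∈ F_q} and H₃ = {1 + b(t − 1) : b ∈ F_q} be the corresponding long root subgroups. Then the set of transvections lying in the set product H₂H₃ = {uw : u ∈ H₂, w ∈ H₃} is exactly (H₂ ∪ H₃) ∖ {1}; in particular, no transvection of Sp_{2n}(q) lying outside H₂ ∪ H₃ belongs to H₂H₃. -/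
set_option linter.unusedSectionVars false
set_option maxHeartbeats 1000000


open Matrix

section AuxLemmas

variable {ι F : Type*} [Fintype ι] [DecidableEq ι] [Field F]

lemma vecMulVec_mulVec' (w r x : ι → F) :
    vecMulVec w r *ᵥ x = (r ⬝ᵥ x) • w := by
  funext i
  simp [mulVec, dotProduct, vecMulVec_apply, Finset.sum_mul, Finset.mul_sum]
  congr 1; funext j; ring

lemma vecMulVec_mul_mat (w r : ι → F) (A : Matrix ι ι F) :
    vecMulVec w r * A = vecMulVec w (r ᵥ* A) := by
  ext i j
  simp [mul_apply, vecMulVec_apply, vecMul, dotProduct, Finset.mul_sum, mul_assoc]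

lemma mat_mul_vecMulVec (A : Matrix ι ι F) (w r : ι → F) :
    A * vecMulVec w r = vecMulVec (A *ᵥ w) r := by
  ext i j
  simp [mul_apply, vecMulVec_apply, mulVec, dotProduct, Finset.sum_mul]
  congr 1; funext k; ring

lemma vecMulVec_mul_vecMulVec (w r w' r' : ι → F) :
    vecMulVec w r * vecMulVec w' r' = (r ⬝ᵥ w') • vecMulVec w r' := by
  rw [vecMulVec_mul_mat]
  ext i j
  simp [vecMulVec_apply, vecMul, dotProduct, Finset.sum_mul, Matrix.smul_apply]
  rw [Finset.mul_sum]
  congr 1; funext k; ring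

lemma vecMulVec_transpose' (w r : ι → F) : (vecMulVec w r)ᵀ = vecMulVec r w := by
  ext i j; simp [vecMulVec_apply, mul_comm]

lemma smul_vecMulVec (a : F) (w r : ι → F) :
    a • vecMulVec w r = vecMulVec w (a • r) := by
  ext i j; simp [vecMulVec_apply, Matrix.smul_apply]; ring

lemma range_vecMulVec {w r : ι → F} (hr : r ≠ 0) :
    LinearMap.range (vecMulVec w r).mulVecLin = Submodule.span F {w} := by
  apply le_antisymm
  · rintro x ⟨y, rfl⟩
    rw [mulVecLin_apply, vecMulVec_mulVec']
    exact Submodule.smul_mem _ _ (Submodule.mem_span_singleton_self w)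
  · rw [Submodule.span_le, Set.singleton_subset_iff]
    obtain ⟨j, hj⟩ := Function.ne_iff.mp hr
    refine ⟨Pi.single j (r j)⁻¹, ?_⟩
    rw [mulVecLin_apply, vecMulVec_mulVec', dotProduct_single]
    rw [mul_inv_cancel₀ (by simpa using hj), one_smul]

lemma rank_vecMulVec {w r : ι → F} (hw : w ≠ 0) (hr : r ≠ 0) :
    (vecMulVec w r).rank = 1 := by
  rw [Matrix.rank, range_vecMulVec hr]
  exact finrank_span_singleton hw

lemma matrix_rank_one_decomp {M : Matrix ι ι F} (h : M.rank = 1) :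
    ∃ w r : ι → F, w ≠ 0 ∧ r ≠ 0 ∧ M = vecMulVec w r := by
  have h' := h
  rw [Matrix.rank] at h'
  obtain ⟨v, hv0, hv⟩ := finrank_eq_one_iff'.mp h'
  have hcol : ∀ j, ∃ c : F, c • (v : ι → F) = M *ᵥ Pi.single j 1 := by
    intro j
    obtain ⟨c, hc⟩ := hv ⟨M *ᵥ Pi.single j 1, ⟨Pi.single j 1, rfl⟩⟩
    exact ⟨c, congrArg Subtype.val hc⟩
  choose r hrr using hcol
  have hw0 : (v : ι → F) ≠ 0 := fun hc => hv0 (Subtype.ext hc)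
  have hMeq : M = vecMulVec (v : ι → F) r := by
    ext i j
    have := congrFun (hrr j) i
    simp only [Pi.smul_apply, smul_eq_mul, mulVec_single, mul_one] at this
    rw [vecMulVec_apply, mul_comm, this]
    rw [MulOpposite.op_one, one_smul, Matrix.col_apply]
  refine ⟨v, r, hw0, ?_, hMeq⟩
  rintro rfl
  rw [hMeq] at h
  have : vecMulVec (v : ι → F) (0 : ι → F) = 0 := by
    ext i j; simp [vecMulVec_apply]
  rw [this, Matrix.rank_zero] at h
  exact one_ne_zero h.symm

lemma dual_dotProduct {r r' : ι → F} (h : ∀ y, r' ⬝ᵥ y = 0 → r ⬝ᵥ y = 0) :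
    ∃ c : F, r = c • r' := by
  by_cases hr' : r' = 0
  · subst hr'
    refine ⟨0, funext fun i => ?_⟩
    have := h (Pi.single i 1) (by simp)
    simpa [dotProduct_single] using this
  · obtain ⟨j, hj⟩ := Function.ne_iff.mp hr'
    have hj' : r' j ≠ 0 := by simpa using hj
    refine ⟨r j / r' j, funext fun i => ?_⟩
    by_cases hij : i = j
    · subst hij; simp [hj']
    · set y : ι → F := (Pi.single i 1 : ι → F) - (r' i / r' j) • (Pi.single j 1 : ι → F)
        with hy_def
      have hy : r' ⬝ᵥ y = 0 := by
        simp [hy_def, dotProduct_sub, dotProduct_smul, dotProduct_single, hj']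
      have h2 := h _ hy
      simp only [hy_def, dotProduct_sub, dotProduct_smul, dotProduct_single, mul_one,
        smul_eq_mul] at h2
      have h3 : r i = r' i / r' j * r j := by linear_combination h2
      rw [h3, Pi.smul_apply, smul_eq_mul]
      field_simp

lemma vecMul_J_elim {n : ℕ} {F : Type*} [Field F] (r : (Fin n ⊕ Fin n) → F) :
    r ᵥ* Matrix.J (Fin n) F
      = Sum.elim (fun j => r (Sum.inr j)) (fun j => -r (Sum.inl j)) := by
  funext k
  cases k with
  | inl j => simp [vecMul, dotProduct, Matrix.J, Fintype.sum_sum_type, one_apply]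
  | inr j => simp [vecMul, dotProduct, Matrix.J, Fintype.sum_sum_type, one_apply]

lemma vecMul_J_dot {n : ℕ} {F : Type*} [Field F] (r : (Fin n ⊕ Fin n) → F) :
    (r ᵥ* Matrix.J (Fin n) F) ⬝ᵥ r = 0 := by
  rw [vecMul_J_elim]
  simp [dotProduct, Fintype.sum_sum_type, mul_comm]

lemma symplectic_structure {n : ℕ} {F : Type*} [Field F] {w r : (Fin n ⊕ Fin n) → F}
    (hw : w ≠ 0) (hr : r ≠ 0)
    (hA : (1 + vecMulVec w r) * Matrix.J (Fin n) F * (1 + vecMulVec w r)ᵀ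
      = Matrix.J (Fin n) F) :
    ∃ ν : F, ν ≠ 0 ∧ r ᵥ* Matrix.J (Fin n) F = ν • w := by
  set Jm := Matrix.J (Fin n) F with hJm
  set W := vecMulVec w r with hW
  set c := r ᵥ* Jm with hc_def
  have ht : (1 + W)ᵀ = 1 + vecMulVec r w := by
    rw [transpose_add, transpose_one, hW, vecMulVec_transpose']
  rw [ht] at hA
  have key : W * Jm + Jm * vecMulVec r w + W * Jm * vecMulVec r w = 0 := by
    calc W * Jm + Jm * vecMulVec r w + W * Jm * vecMulVec r w
        = (1 + W) * Jm * (1 + vecMulVec r w) - Jm := by noncomm_ring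
      _ = 0 := by rw [hA, sub_self]
  have h1 : W * Jm = vecMulVec w c := by rw [hW, vecMulVec_mul_mat]
  have hJr : Jm *ᵥ r = -c := by
    rw [hc_def, ← vecMul_transpose, hJm, Matrix.J_transpose, vecMul_neg]
  have h2 : Jm * vecMulVec r w = -vecMulVec c w := by
    rw [mat_mul_vecMulVec, hJr]
    ext i j; simp [vecMulVec_apply]
  have h3 : W * Jm * vecMulVec r w = 0 := by
    rw [h1, _root_.vecMulVec_mul_vecMulVec]
    have : c ⬝ᵥ r = 0 := vecMul_J_dot r
    rw [this, zero_smul]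
  rw [h3, h1, h2, add_zero] at key
  have heq : vecMulVec w c = vecMulVec c w := by
    have := key
    rw [add_neg_eq_zero] at this
    exact this
  have hent : ∀ i j, w i * c j = c i * w j := by
    intro i j
    have := congrFun (congrFun heq i) j
    simpa [vecMulVec_apply] using this
  have hc0 : c ≠ 0 := by
    intro hc0
    apply hr
    have hr1 : r ᵥ* (Jm * Jm) = -r := by
      rw [hJm, Matrix.J_squared, vecMul_neg, vecMul_one]
    rw [← vecMul_vecMul, ← hc_def, hc0, zero_vecMul] at hr1
    have := hr1.symm
    rwa [neg_eq_zero] at this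
  obtain ⟨i0, hwi0⟩ := Function.ne_iff.mp hw
  obtain ⟨j0, hcj0⟩ := Function.ne_iff.mp hc0
  have hwi0' : w i0 ≠ 0 := by simpa using hwi0
  have hcj0' : c j0 ≠ 0 := by simpa using hcj0
  have hwj0 : w j0 ≠ 0 := by
    intro h0
    have := hent i0 j0
    rw [h0, mul_zero] at this
    exact mul_ne_zero hwi0' hcj0' this
  refine ⟨c j0 / w j0, div_ne_zero hcj0' hwj0, funext fun i => ?_⟩
  have hij := hent i j0
  rw [Pi.smul_apply, smul_eq_mul]
  field_simp
  linear_combination -hij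

end AuxLemmas

open Pointwise in
theorem stmt19 (n : ℕ) (hn : 2 ≤ n) (F : Type*) [Field F] [Fintype F]
    (s t : Sp n F) (hcomm : Commute s t)
    (hs : ((s : Matrix (Fin n ⊕ Fin n) (Fin n ⊕ Fin n) F) - 1).rank = 1)
    (ht : ((t : Matrix (Fin n ⊕ Fin n) (Fin n ⊕ Fin n) F) - 1).rank = 1)
    (hrange : LinearMap.range (((s : Matrix (Fin n ⊕ Fin n) (Fin n ⊕ Fin n) F) - 1).mulVecLin)
      ≠ LinearMap.range (((t : Matrix (Fin n ⊕ Fin n) (Fin n ⊕ Fin n) F) - 1).mulVecLin))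
    (H₂ H₃ : Set (Sp n F))
    (hH₂ : H₂ = {u : Sp n F | ∃ a : F,
      (u : Matrix (Fin n ⊕ Fin n) (Fin n ⊕ Fin n) F)
        = 1 + a • ((s : Matrix (Fin n ⊕ Fin n) (Fin n ⊕ Fin n) F) - 1)})
    (hH₃ : H₃ = {u : Sp n F | ∃ b : F,
      (u : Matrix (Fin n ⊕ Fin n) (Fin n ⊕ Fin n) F)
        = 1 + b • ((t : Matrix (Fin n ⊕ Fin n) (Fin n ⊕ Fin n) F) - 1)}) :
    {u : Sp n F | u ∈ H₂ * H₃
        ∧ ((u : Matrix (Fin n ⊕ Fin n) (Fin n ⊕ Fin n) F) - 1).rank = 1}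
      = (H₂ ∪ H₃) \ {1} := by
  classical
  obtain ⟨w, r, hw, hr, hS⟩ := matrix_rank_one_decomp hs
  obtain ⟨w', r', hw', hr', hT⟩ := matrix_rank_one_decomp ht
  set M := Matrix (Fin n ⊕ Fin n) (Fin n ⊕ Fin n) F
  -- symplectic structure of s and t
  have hs1 : (s : M) = 1 + vecMulVec w r := by
    rw [← hS]; abel
  have ht1 : (t : M) = 1 + vecMulVec w' r' := by
    rw [← hT]; abel
  obtain ⟨ν, hν, hνeq⟩ := symplectic_structure hw hr
    (by rw [← hs1]; exact SymplecticGroup.mem_iff.mp s.2)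
  obtain ⟨ν', hν', hν'eq⟩ := symplectic_structure hw' hr'
    (by rw [← ht1]; exact SymplecticGroup.mem_iff.mp t.2)
  -- non-proportionality of w and w'
  have hwind : ∀ cc : F, w ≠ cc • w' := by
    intro cc hcc
    apply hrange
    have hcc0 : cc ≠ 0 := by rintro rfl; rw [zero_smul] at hcc; exact hw hcc
    rw [hS, hT, range_vecMulVec hr, range_vecMulVec hr', hcc]
    exact Submodule.span_singleton_smul_eq (IsUnit.mk0 cc hcc0) w'
  have hwind' : ∀ cc : F, w' ≠ cc • w := by
    intro cc hcc
    have hcc0 : cc ≠ 0 := by rintro rfl; rw [zero_smul] at hcc; exact hw' hcc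
    exact hwind cc⁻¹ (by rw [hcc, smul_smul, inv_mul_cancel₀ hcc0, one_smul])
  -- commuting transvections: S * T = 0
  have hm : (s : M) * (t : M) = (t : M) * (s : M) := by
    have := congrArg Subtype.val hcomm
    simpa using this
  have hkey : ((s : M) - 1) * ((t : M) - 1) = ((t : M) - 1) * ((s : M) - 1) := by
    calc ((s : M) - 1) * ((t : M) - 1)
        = (s : M) * (t : M) - (s : M) - (t : M) + 1 := by noncomm_ring
      _ = (t : M) * (s : M) - (s : M) - (t : M) + 1 := by rw [hm]
      _ = ((t : M) - 1) * ((s : M) - 1) := by noncomm_ring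
  rw [hS, hT, _root_.vecMulVec_mul_vecMulVec, _root_.vecMulVec_mul_vecMulVec] at hkey
  have hα : r ⬝ᵥ w' = 0 := by
    by_contra hα
    obtain ⟨j1, hj1⟩ := Function.ne_iff.mp hr'
    have hj1' : r' j1 ≠ 0 := by simpa using hj1
    apply hwind (((r' ⬝ᵥ w) * r j1) / ((r ⬝ᵥ w') * r' j1))
    funext i
    have hent := congrFun (congrFun hkey i) j1
    simp only [Matrix.smul_apply, vecMulVec_apply, smul_eq_mul] at hent
    rw [Pi.smul_apply, smul_eq_mul]
    have hd : (r ⬝ᵥ w') * r' j1 ≠ 0 := mul_ne_zero hα hj1'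
    field_simp
    linear_combination hent
  have hST0 : ((s : M) - 1) * ((t : M) - 1) = 0 := by
    rw [hS, hT, _root_.vecMulVec_mul_vecMulVec, hα, zero_smul]
  -- choose test vectors
  have hx : ∃ x, r' ⬝ᵥ x = 0 ∧ r ⬝ᵥ x ≠ 0 := by
    by_contra hcon
    push_neg at hcon
    obtain ⟨cc, hcc⟩ := dual_dotProduct (r := r) (r' := r') hcon
    apply hwind (ν⁻¹ * (cc * ν'))
    have hsm : ν • w = (cc * ν') • w' := by
      rw [← hνeq, hcc, smul_vecMul, hν'eq, smul_smul]
    have := congrArg (fun v => ν⁻¹ • v) hsm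
    simpa [smul_smul, inv_mul_cancel₀ hν] using this
  have hy : ∃ y, r ⬝ᵥ y = 0 ∧ r' ⬝ᵥ y ≠ 0 := by
    by_contra hcon
    push_neg at hcon
    obtain ⟨cc, hcc⟩ := dual_dotProduct (r := r') (r' := r) hcon
    apply hwind' (ν'⁻¹ * (cc * ν))
    have hsm : ν' • w' = (cc * ν) • w := by
      rw [← hν'eq, hcc, smul_vecMul, hνeq, smul_smul]
    have := congrArg (fun v => ν'⁻¹ • v) hsm
    simpa [smul_smul, inv_mul_cancel₀ hν'] using this
  -- linear independence of w, w'
  have hli : LinearIndependent F ![w, w'] :=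
    (LinearIndependent.pair_iff' hw).mpr fun a ha => hwind' a ha.symm
  -- the main set equality
  ext u
  simp only [Set.mem_setOf_eq, Set.mem_diff, Set.mem_union, Set.mem_singleton_iff]
  constructor
  · rintro ⟨humem, hurank⟩
    rw [Set.mem_mul] at humem
    obtain ⟨g, hg, h, hh, rfl⟩ := humem
    rw [hH₂] at hg; obtain ⟨a, hga⟩ := hg
    rw [hH₃] at hh; obtain ⟨b, hhb⟩ := hh
    have hne : g * h ≠ 1 := by
      intro h1
      rw [h1] at hurank
      simp only [OneMemClass.coe_one, sub_self, Matrix.rank_zero] at hurank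
      exact one_ne_zero hurank.symm
    have hgh : ((g * h : Sp n F) : M)
        = 1 + a • ((s : M) - 1) + b • ((t : M) - 1) := by
      have hmul : ((g * h : Sp n F) : M) = (g : M) * (h : M) := by simp
      rw [hmul, hga, hhb]
      have hexp : ∀ X Y : M, (1 + X) * (1 + Y) = 1 + X + Y + X * Y := by
        intro X Y; noncomm_ring
      rw [hexp]
      have : a • ((s : M) - 1) * (b • ((t : M) - 1)) = 0 := by
        rw [smul_mul_assoc, mul_smul_comm, hST0, smul_zero, smul_zero]
      rw [this, add_zero]
    by_cases ha0 : a = 0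
    · refine ⟨Or.inr ?_, hne⟩
      rw [hH₃]
      exact ⟨b, by rw [hgh, ha0, zero_smul, add_zero]⟩
    by_cases hb0 : b = 0
    · refine ⟨Or.inl ?_, hne⟩
      rw [hH₂]
      exact ⟨a, by rw [hgh, hb0, zero_smul, add_zero]⟩
    exfalso
    have hu1 : ((g * h : Sp n F) : M) - 1
        = vecMulVec w (a • r) + vecMulVec w' (b • r') := by
      rw [hgh, hS, hT, _root_.smul_vecMulVec, _root_.smul_vecMulVec]
      abel
    obtain ⟨x, hx1, hx2⟩ := hx
    obtain ⟨y, hy1, hy2⟩ := hy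
    set M0 : M := vecMulVec w (a • r) + vecMulVec w' (b • r') with hM0
    have hMx : M0 *ᵥ x = (a * (r ⬝ᵥ x)) • w := by
      rw [hM0, add_mulVec, vecMulVec_mulVec', vecMulVec_mulVec',
        smul_dotProduct, smul_dotProduct, hx1, smul_eq_mul, smul_eq_mul,
        mul_zero, zero_smul, add_zero]
    have hMy : M0 *ᵥ y = (b * (r' ⬝ᵥ y)) • w' := by
      rw [hM0, add_mulVec, vecMulVec_mulVec', vecMulVec_mulVec',
        smul_dotProduct, smul_dotProduct, hy1, smul_eq_mul, smul_eq_mul,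
        mul_zero, zero_smul, zero_add]
    have hwmem : w ∈ LinearMap.range M0.mulVecLin := by
      refine ⟨(a * (r ⬝ᵥ x))⁻¹ • x, ?_⟩
      rw [LinearMap.map_smul, mulVecLin_apply, hMx, smul_smul,
        inv_mul_cancel₀ (mul_ne_zero ha0 hx2), one_smul]
    have hw'mem : w' ∈ LinearMap.range M0.mulVecLin := by
      refine ⟨(b * (r' ⬝ᵥ y))⁻¹ • y, ?_⟩
      rw [LinearMap.map_smul, mulVecLin_apply, hMy, smul_smul,
        inv_mul_cancel₀ (mul_ne_zero hb0 hy2), one_smul]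
    have hspan : Submodule.span F (Set.range ![w, w']) ≤ LinearMap.range M0.mulVecLin := by
      rw [Submodule.span_le]
      rintro z ⟨i, rfl⟩
      fin_cases i
      · simpa using hwmem
      · simpa using hw'mem
    have h2le : 2 ≤ M0.rank := by
      have hfr : Module.finrank F (Submodule.span F (Set.range ![w, w'])) = 2 := by
        rw [finrank_span_eq_card hli]
        simp
      rw [Matrix.rank]
      calc 2 = Module.finrank F (Submodule.span F (Set.range ![w, w'])) := hfr.symm
        _ ≤ Module.finrank F (LinearMap.range M0.mulVecLin) :=
          Submodule.finrank_mono hspan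
    rw [hu1] at hurank
    omega
  · rintro ⟨hmem | hmem, hne⟩
    · rw [hH₂] at hmem
      obtain ⟨a, hua⟩ := hmem
      have ha0 : a ≠ 0 := by
        rintro rfl
        exact hne (Subtype.ext (by rw [hua, zero_smul, add_zero, OneMemClass.coe_one]))
      refine ⟨?_, ?_⟩
      · have h1H₃ : (1 : Sp n F) ∈ H₃ := by
          rw [hH₃]; exact ⟨0, by simp⟩
        have hu : u = u * 1 := (mul_one u).symm
        rw [hu]
        exact Set.mul_mem_mul (by rw [hH₂]; exact ⟨a, hua⟩) h1H₃
      · rw [hua, add_sub_cancel_left, hS, _root_.smul_vecMulVec]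
        exact rank_vecMulVec hw (smul_ne_zero ha0 hr)
    · rw [hH₃] at hmem
      obtain ⟨b, hub⟩ := hmem
      have hb0 : b ≠ 0 := by
        rintro rfl
        exact hne (Subtype.ext (by rw [hub, zero_smul, add_zero, OneMemClass.coe_one]))
      refine ⟨?_, ?_⟩
      · have h1H₂ : (1 : Sp n F) ∈ H₂ := by
          rw [hH₂]; exact ⟨0, by simp⟩
        have hu : u = 1 * u := (one_mul u).symm
        rw [hu]
        exact Set.mul_mem_mul h1H₂ (by rw [hH₃]; exact ⟨b, hub⟩)
      · rw [hub, add_sub_cancel_left, hT, _root_.smul_vecMulVec]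
        exact rank_vecMulVec hw' (smul_ne_zero hb0 hr')
end
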